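/- arXiv:math/0107222 — 7 statements merged into one kernel-verified Lean document; each statement's English description precedes it below -/
import Mathlib

section
/- Let Λ be a k-graph and m∈ℕ^k. The map λ↦x_λ, where x_λ(p,q) is the unique middle factor λ'' of the factorisation λ=λ'λ''λ''' with d(λ')=p and d(λ''')=m−q, is a bijection between the set Λ^m of paths of degree m and the set of degree-preserving functors x:Ω_{k,m}→Λ. -/
open scoped ENNReal

/-- A `k`-graph: a countable category `Λ` together with a degree functor
`d : Λ → ℕ^k` satisfying the unique factorisation property. -/
structure KGraph (k : ℕ) where
  Obj : Type
  Path : Type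
  countable_path : Countable Path
  r : Path → Obj
  s : Path → Obj
  ι : Obj → Path
  comp : (μ ν : Path) → s μ = r ν → Path
  d : Path → (Fin k → ℕ)
  r_ι : ∀ v, r (ι v) = v
  s_ι : ∀ v, s (ι v) = v
  d_ι : ∀ v, d (ι v) = 0
  r_comp : ∀ μ ν h, r (comp μ ν h) = r μ
  s_comp : ∀ μ ν h, s (comp μ ν h) = s ν
  d_comp : ∀ μ ν h, d (comp μ ν h) = d μ + d ν
  comp_ι_left : ∀ μ (h : s (ι (r μ)) = r μ), comp (ι (r μ)) μ h = μ
  comp_ι_right : ∀ μ (h : s μ = r (ι (s μ))), comp μ (ι (s μ)) h = μ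
  comp_assoc : ∀ μ ν ξ (h1 : s μ = r ν) (h2 : s ν = r ξ)
      (h3 : s (comp μ ν h1) = r ξ) (h4 : s μ = r (comp ν ξ h2)),
      comp (comp μ ν h1) ξ h3 = comp μ (comp ν ξ h2) h4
  factor : ∀ lam (m n : Fin k → ℕ), d lam = m + n →
      ∃! p : Path × Path, ∃ h : s p.1 = r p.2,
        comp p.1 p.2 h = lam ∧ d p.1 = m ∧ d p.2 = n

namespace KGraph

/-- The standard generator `e_i` of `ℕ^k`. -/
def e (k : ℕ) (i : Fin k) : Fin k → ℕ := Pi.single i 1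

variable {k : ℕ} (Λ : KGraph k)

/-- `Λ^m`, the paths of degree `m`. -/
def degSet (m : Fin k → ℕ) : Set Λ.Path := {lam | Λ.d lam = m}

/-- `Λ^m(v)`, the paths of degree `m` with range `v`. -/
def degAt (m : Fin k → ℕ) (v : Λ.Obj) : Set Λ.Path :=
  {lam | Λ.d lam = m ∧ Λ.r lam = v}

/-- `Λ^{≤ q}`: paths `λ` with `d λ ≤ q` which cannot be extended within degree `q`. -/
def le (q : Fin k → ℕ) : Set Λ.Path :=
  {lam | Λ.d lam ≤ q ∧
    ∀ i : Fin k, Λ.d lam + e k i ≤ q → Λ.degAt (e k i) (Λ.s lam) = ∅}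

/-- `Λ^{≤ q}(v)`. -/
def leAt (q : Fin k → ℕ) (v : Λ.Obj) : Set Λ.Path :=
  {lam | lam ∈ Λ.le q ∧ Λ.r lam = v}

/-- Row-finiteness: each `Λ^m(v)` is finite. -/
def RowFinite : Prop := ∀ (v : Λ.Obj) (m : Fin k → ℕ), (Λ.degAt m v).Finite

/-- No sources: each `Λ^m(v)` is nonempty. -/
def NoSources : Prop := ∀ (v : Λ.Obj) (m : Fin k → ℕ), (Λ.degAt m v).Nonempty

/-- Local convexity. -/
def LocallyConvex : Prop :=
  ∀ (v : Λ.Obj) (i j : Fin k), i ≠ j →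
    ∀ lam μ, lam ∈ Λ.degAt (e k i) v → μ ∈ Λ.degAt (e k j) v →
      (Λ.degAt (e k j) (Λ.s lam)).Nonempty ∧ (Λ.degAt (e k i) (Λ.s μ)).Nonempty

section CK

variable {A : Type} [Ring A] [StarRing A]

/-- Cuntz-Krieger relations (1)-(3). -/
structure IsCK13 (S : Λ.Path → A) : Prop where
  proj : ∀ v, S (Λ.ι v) * S (Λ.ι v) = S (Λ.ι v)
  selfadj : ∀ v, star (S (Λ.ι v)) = S (Λ.ι v)
  orth : ∀ v w, v ≠ w → S (Λ.ι v) * S (Λ.ι w) = 0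
  mul : ∀ μ ν (h : Λ.s μ = Λ.r ν), S (Λ.comp μ ν h) = S μ * S ν
  src : ∀ lam, star (S lam) * S lam = S (Λ.ι (Λ.s lam))

/-- A Cuntz-Krieger `Λ`-family: relations (1)-(4). -/
structure IsCKFamily (S : Λ.Path → A) extends IsCK13 Λ S : Prop where
  sum : ∀ (v : Λ.Obj) (m : Fin k → ℕ),
    S (Λ.ι v) = ∑ᶠ lam ∈ Λ.leAt m v, S lam * star (S lam)

end CK

/-- Hereditary subsets of `Λ^0`. -/
def Hereditary (H : Set Λ.Obj) : Prop :=
  ∀ lam : Λ.Path, Λ.r lam ∈ H → Λ.s lam ∈ H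

/-- The operator `Σ` used in the inductive construction of the saturation. -/
def Sig (F : Set Λ.Obj) : Set Λ.Obj :=
  ⋃ i : Fin k, {v | ∀ lam ∈ Λ.leAt (e k i) v, Λ.s lam ∈ F}

/-- Saturated subsets of `Λ^0`. -/
def Saturated (H : Set Λ.Obj) : Prop :=
  ∀ (v : Λ.Obj) (i : Fin k), (∀ lam ∈ Λ.leAt (e k i) v, Λ.s lam ∈ H) → v ∈ H

/-- The saturation: smallest saturated set containing `H`. -/
def saturation (H : Set Λ.Obj) : Set Λ.Obj :=
  ⋂₀ {S | Λ.Saturated S ∧ H ⊆ S}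

end KGraph

/-- A boundary path: a degree-preserving graph morphism `x : Ω_{k,m} → Λ`
for some `m ∈ (ℕ ∪ {∞})^k`, such that whenever `p + e_i ≰ m`, the vertex `x(p)`
receives no edges of degree `e_i`. -/
structure BPath {k : ℕ} (Λ : KGraph k) where
  deg : Fin k → ℕ∞
  toFun : ∀ p q : Fin k → ℕ, p ≤ q → (∀ i, (q i : ℕ∞) ≤ deg i) → Λ.Path
  d_toFun : ∀ p q h1 h2, Λ.d (toFun p q h1 h2) = q - p
  comp_toFun : ∀ p q r (hpq : p ≤ q) (hqr : q ≤ r) (hpr : p ≤ r)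
      (hr : ∀ i, (r i : ℕ∞) ≤ deg i) (hq : ∀ i, (q i : ℕ∞) ≤ deg i),
    ∃ hc : Λ.s (toFun p q hpq hq) = Λ.r (toFun q r hqr hr),
      Λ.comp _ _ hc = toFun p r hpr hr
  bdry : ∀ (p : Fin k → ℕ) (hp : ∀ i, (p i : ℕ∞) ≤ deg i) (i : Fin k),
    ¬ ((p i : ℕ∞) + 1 ≤ deg i) →
    Λ.degAt (KGraph.e k i) (Λ.r (toFun p p le_rfl hp)) = ∅

namespace BPath

variable {k : ℕ} {Λ : KGraph k}

/-- The range of a boundary path. -/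
def r (x : BPath Λ) : Λ.Obj :=
  Λ.r (x.toFun 0 0 le_rfl (fun i => by simp))

end BPath

/-- An infinite path: a graph morphism `x : Ω_k → Λ`. -/
structure InfPath {k : ℕ} (Λ : KGraph k) where
  toFun : ∀ p q : Fin k → ℕ, p ≤ q → Λ.Path
  d_toFun : ∀ p q h, Λ.d (toFun p q h) = q - p
  comp_toFun : ∀ p q r (hpq : p ≤ q) (hqr : q ≤ r) (hpr : p ≤ r),
    ∃ hc : Λ.s (toFun p q hpq) = Λ.r (toFun q r hqr),
      Λ.comp _ _ hc = toFun p r hpr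

namespace InfPath

variable {k : ℕ} {Λ : KGraph k}

/-- The range of an infinite path. -/
def r (x : InfPath Λ) : Λ.Obj := Λ.r (x.toFun 0 0 le_rfl)

/-- The shift `σ^p`. -/
def shift (p : Fin k → ℕ) (x : InfPath Λ) : InfPath Λ where
  toFun a b h := x.toFun (a + p) (b + p) (add_le_add_left h p)
  d_toFun a b h := by
    rw [x.d_toFun]
    funext i
    simp only [Pi.sub_apply, Pi.add_apply]
    omega
  comp_toFun a b c hab hbc hac :=
    x.comp_toFun (a + p) (b + p) (c + p) (add_le_add_left hab p)
      (add_le_add_left hbc p) (add_le_add_left hac p)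

end InfPath

/-- A degree-preserving functor (graph morphism) `x : Ω_{k,m} → Λ` for
`m ∈ ℕ^k`: it assigns to each morphism `(p,q)` of `Ω_{k,m}` a path `x(p,q)` of
degree `q - p`, compatibly with composition. -/
structure GraphMor {k : ℕ} (Λ : KGraph k) (m : Fin k → ℕ) where
  toFun : ∀ p q : Fin k → ℕ, p ≤ q → q ≤ m → Λ.Path
  d_toFun : ∀ p q h1 h2, Λ.d (toFun p q h1 h2) = q - p
  comp_toFun : ∀ p q r (hpq : p ≤ q) (hqr : q ≤ r) (hpr : p ≤ r)
      (hq : q ≤ m) (hr : r ≤ m),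
    ∃ hc : Λ.s (toFun p q hpq hq) = Λ.r (toFun q r hqr hr),
      Λ.comp _ _ hc = toFun p r hpr hr

namespace KGraph

variable {k : ℕ} (Λ : KGraph k)

/-- Unique triple factorisation: there is a unique middle segment. -/
theorem triple (lam : Λ.Path) {m : Fin k → ℕ} (hd : Λ.d lam = m) (p q : Fin k → ℕ)
    (h1 : p ≤ q) (h2 : q ≤ m) :
    ∃! x : Λ.Path, Λ.d x = q - p ∧ ∃ (μ ν : Λ.Path) (hc1 : Λ.s x = Λ.r ν)
      (hc2 : Λ.s μ = Λ.r (Λ.comp x ν hc1)),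
      Λ.comp μ (Λ.comp x ν hc1) hc2 = lam ∧ Λ.d μ = p ∧ Λ.d ν = m - q := by
  have hpm : p ≤ m := h1.trans h2
  have e1 : Λ.d lam = p + (m - p) := by
    rw [hd]; funext i; have hi : p i ≤ m i := hpm i
    simp only [Pi.add_apply, Pi.sub_apply]; omega
  obtain ⟨⟨a, b⟩, ⟨hab, heab, hda, hdb⟩, hu1⟩ := Λ.factor lam p (m - p) e1
  have e2 : Λ.d b = (q - p) + (m - q) := by
    rw [hdb]; funext i
    have hi1 : p i ≤ q i := h1 i; have hi2 : q i ≤ m i := h2 i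
    simp only [Pi.add_apply, Pi.sub_apply]; omega
  obtain ⟨⟨c, e⟩, ⟨hce, hece, hdc, hde⟩, hu2⟩ := Λ.factor b (q - p) (m - q) e2
  subst hece
  refine ⟨c, ⟨hdc, a, e, hce, hab, heab, hda, hde⟩, ?_⟩
  rintro x ⟨hdx, μ, ν, hc1, hc2, hcomp, hdμ, hdν⟩
  have hdinner : Λ.d (Λ.comp x ν hc1) = m - p := by
    rw [Λ.d_comp, hdx, hdν]; funext i
    have hi1 : p i ≤ q i := h1 i; have hi2 : q i ≤ m i := h2 i
    simp only [Pi.add_apply, Pi.sub_apply]; omega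
  have h := hu1 (μ, Λ.comp x ν hc1) ⟨hc2, hcomp, hdμ, hdinner⟩
  have hb2 : Λ.comp x ν hc1 = Λ.comp c e hce := congrArg Prod.snd h
  have h' := hu2 (x, ν) ⟨hc1, hb2, hdx, hdν⟩
  exact congrArg Prod.fst h'

/-- The middle segment of `lam` between `p` and `q`. -/
noncomputable def seg (lam : Λ.Path) {m : Fin k → ℕ} (hd : Λ.d lam = m)
    (p q : Fin k → ℕ) (h1 : p ≤ q) (h2 : q ≤ m) : Λ.Path :=
  (Λ.triple lam hd p q h1 h2).exists.choose

theorem seg_spec (lam : Λ.Path) {m : Fin k → ℕ} (hd : Λ.d lam = m)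
    (p q : Fin k → ℕ) (h1 : p ≤ q) (h2 : q ≤ m) :
    Λ.d (Λ.seg lam hd p q h1 h2) = q - p ∧
    ∃ (μ ν : Λ.Path) (hc1 : Λ.s (Λ.seg lam hd p q h1 h2) = Λ.r ν)
      (hc2 : Λ.s μ = Λ.r (Λ.comp (Λ.seg lam hd p q h1 h2) ν hc1)),
      Λ.comp μ (Λ.comp (Λ.seg lam hd p q h1 h2) ν hc1) hc2 = lam ∧
      Λ.d μ = p ∧ Λ.d ν = m - q :=
  (Λ.triple lam hd p q h1 h2).exists.choose_spec

theorem seg_eq (lam : Λ.Path) {m : Fin k → ℕ} (hd : Λ.d lam = m)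
    (p q : Fin k → ℕ) (h1 : p ≤ q) (h2 : q ≤ m) {x : Λ.Path}
    (hx : Λ.d x = q - p ∧ ∃ (μ ν : Λ.Path) (hc1 : Λ.s x = Λ.r ν)
      (hc2 : Λ.s μ = Λ.r (Λ.comp x ν hc1)),
      Λ.comp μ (Λ.comp x ν hc1) hc2 = lam ∧ Λ.d μ = p ∧ Λ.d ν = m - q) :
    x = Λ.seg lam hd p q h1 h2 :=
  (Λ.triple lam hd p q h1 h2).unique hx (Λ.seg_spec lam hd p q h1 h2)

theorem seg_self (lam : Λ.Path) {m : Fin k → ℕ} (hd : Λ.d lam = m)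
    (h0 : (0 : Fin k → ℕ) ≤ m) :
    lam = Λ.seg lam hd 0 m h0 le_rfl := by
  apply Λ.seg_eq
  have hc1 : Λ.s lam = Λ.r (Λ.ι (Λ.s lam)) := (Λ.r_ι _).symm
  have hinner : Λ.comp lam (Λ.ι (Λ.s lam)) hc1 = lam := Λ.comp_ι_right lam hc1
  have hc2 : Λ.s (Λ.ι (Λ.r lam)) = Λ.r (Λ.comp lam (Λ.ι (Λ.s lam)) hc1) := by
    rw [Λ.s_ι, Λ.r_comp]
  refine ⟨by rw [hd]; funext i; simp, Λ.ι (Λ.r lam), Λ.ι (Λ.s lam), hc1, hc2, ?_,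
    Λ.d_ι _, by rw [Λ.d_ι]; funext i; simp⟩
  simp only [hinner]
  exact Λ.comp_ι_left lam _

theorem seg_comp (lam : Λ.Path) {m : Fin k → ℕ} (hd : Λ.d lam = m)
    (p q r : Fin k → ℕ) (hpq : p ≤ q) (hqr : q ≤ r) (hrm : r ≤ m) :
    ∃ hc : Λ.s (Λ.seg lam hd p q hpq (hqr.trans hrm)) =
        Λ.r (Λ.seg lam hd q r hqr hrm),
      Λ.comp _ _ hc = Λ.seg lam hd p r (hpq.trans hqr) hrm := by
  obtain ⟨hds1, μ₁, ν₁, hc11, hc21, hcomp1, hdμ1, hdν1⟩ :=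
    Λ.seg_spec lam hd p q hpq (hqr.trans hrm)
  obtain ⟨hds2, μ₂, ν₂, hc12, hc22, hcomp2, hdμ2, hdν2⟩ :=
    Λ.seg_spec lam hd q r hqr hrm
  set s1 := Λ.seg lam hd p q hpq (hqr.trans hrm) with hs1
  set s2 := Λ.seg lam hd q r hqr hrm with hs2
  have e3 : Λ.d lam = q + (m - q) := by
    rw [hd]; funext i; have hi : q i ≤ m i := (hqr.trans hrm) i
    simp only [Pi.add_apply, Pi.sub_apply]; omega
  obtain ⟨⟨A, B⟩, _, hu⟩ := Λ.factor lam q (m - q) e3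
  -- first factorisation of lam at (q, m-q)
  have ha : Λ.s μ₁ = Λ.r s1 := hc21.trans (Λ.r_comp _ _ _)
  have hca : Λ.s (Λ.comp μ₁ s1 ha) = Λ.r ν₁ := (Λ.s_comp _ _ _).trans hc11
  have heq1 : Λ.comp (Λ.comp μ₁ s1 ha) ν₁ hca = lam :=
    (Λ.comp_assoc μ₁ s1 ν₁ ha hc11 hca hc21).trans hcomp1
  have hd1 : Λ.d (Λ.comp μ₁ s1 ha) = q := by
    rw [Λ.d_comp, hdμ1, hds1]; funext i; have hi : p i ≤ q i := hpq i
    simp only [Pi.add_apply, Pi.sub_apply]; omega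
  have hAB1 := hu (Λ.comp μ₁ s1 ha, ν₁) ⟨hca, heq1, hd1, hdν1⟩
  -- second factorisation of lam at (q, m-q)
  have hd2 : Λ.d (Λ.comp s2 ν₂ hc12) = m - q := by
    rw [Λ.d_comp, hds2, hdν2]; funext i
    have hi1 : q i ≤ r i := hqr i; have hi2 : r i ≤ m i := hrm i
    simp only [Pi.add_apply, Pi.sub_apply]; omega
  have hAB2 := hu (μ₂, Λ.comp s2 ν₂ hc12) ⟨hc22, hcomp2, hdμ2, hd2⟩
  have hμeq : Λ.comp μ₁ s1 ha = μ₂ :=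
    (congrArg Prod.fst hAB1).trans (congrArg Prod.fst hAB2).symm
  have hνeq : ν₁ = Λ.comp s2 ν₂ hc12 :=
    (congrArg Prod.snd hAB1).trans (congrArg Prod.snd hAB2).symm
  have hc : Λ.s s1 = Λ.r s2 := by
    have := (Λ.s_comp μ₁ s1 ha).symm.trans
      ((congrArg Λ.s hμeq).trans (hc22.trans (Λ.r_comp _ _ _)))
    exact this
  refine ⟨hc, ?_⟩
  subst hνeq
  apply Λ.seg_eq
  have hc1' : Λ.s (Λ.comp s1 s2 hc) = Λ.r ν₂ := (Λ.s_comp _ _ _).trans hc12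
  have hassoc : Λ.comp (Λ.comp s1 s2 hc) ν₂ hc1' =
      Λ.comp s1 (Λ.comp s2 ν₂ hc12) hc11 :=
    Λ.comp_assoc s1 s2 ν₂ hc hc12 hc1' hc11
  have hc2' : Λ.s μ₁ = Λ.r (Λ.comp (Λ.comp s1 s2 hc) ν₂ hc1') := by
    rw [Λ.r_comp, Λ.r_comp]
    exact hc21.trans (Λ.r_comp _ _ _)
  have hdcomp : Λ.d (Λ.comp s1 s2 hc) = r - p := by
    rw [Λ.d_comp, hds1, hds2]; funext i
    have hi1 : p i ≤ q i := hpq i; have hi2 : q i ≤ r i := hqr i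
    simp only [Pi.add_apply, Pi.sub_apply]; omega
  refine ⟨hdcomp, μ₁, ν₂, hc1', hc2', ?_, hdμ1, hdν2⟩
  simp only [hassoc]
  exact hcomp1

theorem GraphMor.ext' {m : Fin k → ℕ} {G H : GraphMor Λ m}
    (h : ∀ p q h1 h2, G.toFun p q h1 h2 = H.toFun p q h1 h2) : G = H := by
  obtain ⟨f, df, cf⟩ := G
  obtain ⟨g, dg, cg⟩ := H
  obtain rfl : f = g := by funext p q h1 h2; exact h p q h1 h2
  rfl

end KGraph

/-- the map `λ ↦ x_λ`, where `x_λ(p,q)` is the middle factor of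
`λ = λ'λ''λ'''` with `d λ' = p`, `d λ''' = m - q`, is a bijection from `Λ^m`
onto the graph morphisms `Ω_{k,m} → Λ`. -/
theorem stmt2 {k : ℕ} (Λ : KGraph k) (m : Fin k → ℕ) :
    ∃ F : {lam : Λ.Path // Λ.d lam = m} → GraphMor Λ m,
      Function.Bijective F ∧
      ∀ (lam : {lam : Λ.Path // Λ.d lam = m}) (p q : Fin k → ℕ)
        (h1 : p ≤ q) (h2 : q ≤ m),
        ∃ (μ ν : Λ.Path) (hc1 : Λ.s ((F lam).toFun p q h1 h2) = Λ.r ν)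
          (hc2 : Λ.s μ = Λ.r (Λ.comp ((F lam).toFun p q h1 h2) ν hc1)),
          Λ.comp μ (Λ.comp ((F lam).toFun p q h1 h2) ν hc1) hc2 = lam.1 ∧
          Λ.d μ = p ∧ Λ.d ν = m - q := by
  classical
  have h0 : (0 : Fin k → ℕ) ≤ m := fun i => Nat.zero_le _
  refine ⟨fun lam =>
    { toFun := fun p q h1 h2 => Λ.seg lam.1 lam.2 p q h1 h2
      d_toFun := fun p q h1 h2 => (Λ.seg_spec lam.1 lam.2 p q h1 h2).1
      comp_toFun := fun p q r hpq hqr hpr hq hr =>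
        Λ.seg_comp lam.1 lam.2 p q r hpq hqr hr }, ⟨?_, ?_⟩, ?_⟩
  · -- injective
    intro a b hab
    apply Subtype.ext
    have ha := Λ.seg_self a.1 a.2 h0
    have hb := Λ.seg_self b.1 b.2 h0
    have h := congrArg (fun G : GraphMor Λ m => G.toFun 0 m h0 le_rfl) hab
    simp only at h
    exact ha.trans (h.trans hb.symm)
  · -- surjective
    intro G
    have hd : Λ.d (G.toFun 0 m h0 le_rfl) = m := by
      rw [G.d_toFun]; funext i; simp
    refine ⟨⟨G.toFun 0 m h0 le_rfl, hd⟩, ?_⟩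
    apply KGraph.GraphMor.ext'
    intro p q h1 h2
    have hpm : p ≤ m := h1.trans h2
    refine (Λ.seg_eq (G.toFun 0 m h0 le_rfl) hd p q h1 h2 ?_).symm
    obtain ⟨hcA, hA⟩ := G.comp_toFun p q m h1 h2 hpm h2 le_rfl
    have h0p : (0 : Fin k → ℕ) ≤ p := fun i => Nat.zero_le _
    obtain ⟨hcB, hB⟩ := G.comp_toFun 0 p m h0p hpm h0 hpm le_rfl
    have hc2 : Λ.s (G.toFun 0 p h0p hpm) =
        Λ.r (Λ.comp (G.toFun p q h1 h2) (G.toFun q m h2 le_rfl) hcA) := by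
      rw [← hA] at hcB; exact hcB
    refine ⟨G.d_toFun p q h1 h2, G.toFun 0 p h0p hpm, G.toFun q m h2 le_rfl,
      hcA, hc2, ?_, by rw [G.d_toFun]; funext i; simp, G.d_toFun q m h2 le_rfl⟩
    simp only [hA]
    exact hB
  · -- the factorisation property
    intro lam p q h1 h2
    obtain ⟨_, μ, ν, hc1, hc2, hcomp, hdμ, hdν⟩ := Λ.seg_spec lam.1 lam.2 p q h1 h2
    exact ⟨μ, ν, hc1, hc2, hcomp, hdμ, hdν⟩
end

section
/- Let (Λ,d) be a locally convex k-graph. For every vertex v, every m∈ℕ^k∖{0}, and every j with m_j≥1, Λ^{≤m}(v) = {λ'λ'' : λ'∈Λ^{≤(m−e_j)}(v) and λ''∈Λ^{≤e_j}(s(λ'))}. -/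
open scoped ENNReal

/-- A path of degree `0` is an identity morphism. -/
lemma KGraph.deg_zero {k : ℕ} (Λ : KGraph k) {lam : Λ.Path} (h : Λ.d lam = 0) :
    lam = Λ.ι (Λ.r lam) ∧ Λ.s lam = Λ.r lam := by
  obtain ⟨p, -, hu⟩ := Λ.factor lam 0 0 (by simpa using h)
  have h1 : (Λ.ι (Λ.r lam), lam) = p := by
    refine hu _ ⟨by rw [Λ.s_ι], Λ.comp_ι_left lam _, Λ.d_ι _, h⟩
  have h2 : (lam, Λ.ι (Λ.s lam)) = p := by
    refine hu _ ⟨(Λ.r_ι _).symm, Λ.comp_ι_right lam _, h, Λ.d_ι _⟩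
  have h3 := h1.trans h2.symm
  have hfst : Λ.ι (Λ.r lam) = lam := congrArg Prod.fst h3
  refine ⟨hfst.symm, ?_⟩
  conv_lhs => rw [← hfst]
  rw [Λ.s_ι]

lemma KGraph.e_apply {k : ℕ} (i i' : Fin k) :
    KGraph.e k i i' = if i' = i then 1 else 0 := by
  simp [KGraph.e, Pi.single_apply]

lemma KGraph.pile {k : ℕ} {f g : Fin k → ℕ} (h : f ≤ g) (i : Fin k) :
    f i ≤ g i := h i

/-- in a locally convex `k`-graph, for `m ≠ 0` and `m_j ≥ 1`,
`Λ^{≤ m}(v) = {λ'λ'' : λ' ∈ Λ^{≤ m - e_j}(v), λ'' ∈ Λ^{≤ e_j}(s λ')}`. -/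
theorem stmt9 {k : ℕ} (Λ : KGraph k) (hlc : Λ.LocallyConvex) (v : Λ.Obj)
    (m : Fin k → ℕ) (hm : m ≠ 0) (j : Fin k) (hj : 1 ≤ m j) :
    Λ.leAt m v =
      {lam | ∃ (lam1 lam2 : Λ.Path) (hc : Λ.s lam1 = Λ.r lam2),
        lam = Λ.comp lam1 lam2 hc ∧
        lam1 ∈ Λ.leAt (m - KGraph.e k j) v ∧
        lam2 ∈ Λ.leAt (KGraph.e k j) (Λ.s lam1)} := by
  ext lam
  simp only [KGraph.leAt, KGraph.le, Set.mem_setOf_eq]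
  constructor
  · rintro ⟨⟨hd, hext⟩, hr⟩
    by_cases hcase : Λ.d lam j < m j
    · -- Case A : direction j not full; take lam2 = ι (s lam)
      have hAj : Λ.degAt (KGraph.e k j) (Λ.s lam) = ∅ := by
        apply hext j
        intro i'
        have h2 := KGraph.pile hd i'
        simp only [Pi.add_apply, KGraph.e_apply]
        by_cases h' : i' = j
        · subst h'; simp only [↓reduceIte]; omega
        · simp only [if_neg h']; omega
      refine ⟨lam, Λ.ι (Λ.s lam), (Λ.r_ι _).symm, (Λ.comp_ι_right lam _).symm,
        ⟨⟨?_, ?_⟩, hr⟩, ⟨⟨?_, ?_⟩, Λ.r_ι _⟩⟩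
      · intro i'
        have h2 := KGraph.pile hd i'
        simp only [Pi.sub_apply, KGraph.e_apply]
        by_cases h' : i' = j
        · subst h'; simp only [↓reduceIte]; omega
        · simp only [if_neg h']; omega
      · intro i hi
        apply hext i
        intro i'
        have h1 := KGraph.pile hi i'
        have h2 := KGraph.pile hd i'
        simp only [Pi.add_apply, Pi.sub_apply, KGraph.e_apply] at h1 ⊢
        by_cases h' : i' = j
        · subst h'; simp only [↓reduceIte] at h1 ⊢; omega
        · simp only [if_neg h'] at h1 ⊢; omega
      · intro i'
        simp [Λ.d_ι]
      · intro i hi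
        have hij : i = j := by
          have h1 := KGraph.pile hi i
          simp only [Pi.add_apply, Λ.d_ι, Pi.zero_apply, KGraph.e_apply,
            ↓reduceIte] at h1
          by_contra hne
          simp only [if_neg hne] at h1
          omega
        subst hij
        rw [Λ.s_ι]
        exact hAj
    · -- Case B : d lam j = m j ≥ 1; split off a final edge of degree e_j
      have hdj : Λ.d lam j = m j := le_antisymm (KGraph.pile hd j) (not_lt.1 hcase)
      obtain ⟨⟨l1, l2⟩, ⟨hc, hcomp, hd1, hd2⟩, -⟩ :=
        Λ.factor lam (Λ.d lam - KGraph.e k j) (KGraph.e k j) (by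
          funext i'
          simp only [Pi.add_apply, Pi.sub_apply, KGraph.e_apply]
          by_cases h' : i' = j
          · subst h'; simp only [↓reduceIte]; omega
          · simp only [if_neg h']; omega)
      simp only at hc hcomp hd1 hd2
      have hrl1 : Λ.r l1 = v := by
        rw [← hr, ← hcomp, Λ.r_comp]
      have hsl2 : Λ.s l2 = Λ.s lam := by rw [← hcomp, Λ.s_comp]
      refine ⟨l1, l2, hc, hcomp.symm, ⟨⟨?_, ?_⟩, hrl1⟩, ⟨⟨?_, ?_⟩, hc.symm⟩⟩
      · intro i'
        have h2 := KGraph.pile hd i'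
        simp only [hd1, Pi.sub_apply, KGraph.e_apply]
        by_cases h' : i' = j
        · subst h'; simp only [↓reduceIte]; omega
        · simp only [if_neg h']; omega
      · -- extension condition for l1
        intro i hi
        by_cases hij : i = j
        · subst hij
          exfalso
          have h1 := KGraph.pile hi i
          simp only [hd1, Pi.add_apply, Pi.sub_apply, KGraph.e_apply,
            ↓reduceIte] at h1
          omega
        · -- i ≠ j : use local convexity
          by_contra hne
          obtain ⟨ν, hν⟩ := Set.nonempty_iff_ne_empty.2 hne
          have hmain : Λ.d lam + KGraph.e k i ≤ m := by
            intro i'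
            have h1 := KGraph.pile hi i'
            have h2 := KGraph.pile hd i'
            simp only [hd1, Pi.add_apply, Pi.sub_apply, KGraph.e_apply] at h1 ⊢
            by_cases h' : i' = j
            · subst h'; simp only [↓reduceIte, if_neg hij] at h1 ⊢; omega
            · simp only [if_neg h'] at h1 ⊢
              by_cases h'' : i' = i
              · subst h''; simp only [↓reduceIte] at h1 ⊢; omega
              · simp only [if_neg h''] at h1 ⊢; omega
          have hempty := hext i hmain
          have hl2 : l2 ∈ Λ.degAt (KGraph.e k j) (Λ.s l1) := ⟨hd2, hc.symm⟩
          have hnon := (hlc (Λ.s l1) i j hij ν l2 hν hl2).2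
          rw [hsl2, hempty] at hnon
          exact hnon.ne_empty rfl
      · intro i'; simp [hd2]
      · intro i hi
        exfalso
        have h1 := KGraph.pile hi i
        simp only [hd2, Pi.add_apply, KGraph.e_apply, ↓reduceIte] at h1
        by_cases h' : i = j
        · subst h'; simp only [↓reduceIte] at h1; omega
        · simp only [if_neg h'] at h1; omega
  · rintro ⟨l1, l2, hc, rfl, ⟨⟨hd1, hext1⟩, hr1⟩, ⟨⟨hd2, hext2⟩, hr2⟩⟩
    have hdc : Λ.d (Λ.comp l1 l2 hc) = Λ.d l1 + Λ.d l2 := Λ.d_comp _ _ _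
    have hsc : Λ.s (Λ.comp l1 l2 hc) = Λ.s l2 := Λ.s_comp _ _ _
    refine ⟨⟨?_, ?_⟩, by rw [Λ.r_comp, hr1]⟩
    · intro i'
      have h1 := KGraph.pile hd1 i'
      have h2 := KGraph.pile hd2 i'
      simp only [hdc, Pi.add_apply, Pi.sub_apply, KGraph.e_apply] at h1 h2 ⊢
      by_cases h' : i' = j
      · subst h'; simp only [↓reduceIte] at h1 h2; omega
      · simp only [if_neg h'] at h1 h2; omega
    · intro i hi
      rw [hsc]
      by_cases hzero : Λ.d l2 = 0
      · have hsr : Λ.s l2 = Λ.s l1 := by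
          rw [(Λ.deg_zero hzero).2, hr2]
        by_cases hij : i = j
        · subst hij
          apply hext2 i
          intro i'
          simp [hzero]
        · rw [hsr]
          apply hext1 i
          intro i'
          have h1 := KGraph.pile hi i'
          have h2 := KGraph.pile hd1 i'
          simp only [hdc, hzero, Pi.add_apply, Pi.sub_apply, Pi.zero_apply,
            KGraph.e_apply] at h1 h2 ⊢
          by_cases h' : i' = j
          · subst h'; simp only [↓reduceIte, if_neg (Ne.symm hij)] at h1 h2 ⊢; omega
          · simp only [if_neg h'] at h1 h2 ⊢
            by_cases h'' : i' = i
            · subst h''; simp only [↓reduceIte] at h1 ⊢; omega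
            · simp only [if_neg h''] at h1 ⊢; omega
      · -- d l2 = e_j
        have hj1 : Λ.d l2 j = 1 := by
          by_contra h'
          apply hzero
          funext i''
          have h3 := KGraph.pile hd2 i''
          simp only [KGraph.e_apply] at h3
          simp only [Pi.zero_apply]
          by_cases h'' : i'' = j
          · subst h''; simp only [↓reduceIte] at h3; omega
          · simp only [if_neg h''] at h3; omega
        have hd2e : Λ.d l2 = KGraph.e k j := by
          funext i'
          have h2 := KGraph.pile hd2 i'
          simp only [KGraph.e_apply] at h2 ⊢
          by_cases h' : i' = j
          · subst h'; simp only [↓reduceIte]; exact hj1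
          · simp only [if_neg h'] at h2 ⊢; omega
        have hl1ej : Λ.d l1 + KGraph.e k i ≤ m - KGraph.e k j := by
          intro i'
          have h1 := KGraph.pile hi i'
          simp only [hdc, hd2e, Pi.add_apply, Pi.sub_apply, KGraph.e_apply]
            at h1 ⊢
          by_cases h' : i' = j
          · subst h'; simp only [↓reduceIte] at h1 ⊢
            by_cases hij : i' = i
            · subst hij; simp only [↓reduceIte] at h1 ⊢; omega
            · simp only [if_neg hij] at h1 ⊢; omega
          · simp only [if_neg h'] at h1 ⊢
            by_cases h'' : i' = i
            · subst h''; simp only [↓reduceIte] at h1 ⊢; omega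
            · simp only [if_neg h''] at h1 ⊢; omega
        by_cases hij : i = j
        · subst hij
          exfalso
          have hempty := hext1 i hl1ej
          have hmem : l2 ∈ Λ.degAt (KGraph.e k i) (Λ.s l1) := ⟨hd2e, hr2⟩
          rw [hempty] at hmem
          exact hmem
        · by_contra hne
          obtain ⟨μ, hμd, hμr⟩ := Set.nonempty_iff_ne_empty.2 hne
          have hcμ : Λ.s l2 = Λ.r μ := hμr.symm
          obtain ⟨⟨n1, n2⟩, ⟨hnc, hncomp, hnd1, hnd2⟩, -⟩ :=
            Λ.factor (Λ.comp l2 μ hcμ) (KGraph.e k i) (KGraph.e k j) (by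
              rw [Λ.d_comp, hd2e, hμd]
              funext i'
              simp only [Pi.add_apply]
              omega)
          simp only at hnc hncomp hnd1 hnd2
          have hν : n1 ∈ Λ.degAt (KGraph.e k i) (Λ.s l1) := by
            refine ⟨hnd1, ?_⟩
            have hrr : Λ.r (Λ.comp n1 n2 hnc) = Λ.r (Λ.comp l2 μ hcμ) := by
              rw [hncomp]
            rw [Λ.r_comp, Λ.r_comp] at hrr
            rw [hrr, hr2]
          have hempty := hext1 i hl1ej
          rw [hempty] at hν
          exact hν
end

section
/- Let (Λ,d) be a locally convex row-finite k-graph and {s_λ} a family of partial isometries satisfying Cuntz-Krieger relations (1)-(3). Then relation (4) (s_v = Σ_{λ∈Λ^{≤m}(v)} s_λ s_λ* for all v and m∈ℕ^k) holds if and only if the edge relations hold: s_v = Σ_{λ∈Λ^{e_i}(v)} s_λ s_λ* for all v∈Λ^0 and all i∈{1,…,k} with Λ^{e_i}(v)≠∅. -/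
open scoped ENNReal

section Aux

namespace KGraphAux

open KGraph

variable {k : ℕ} {Λ : KGraph k}

lemma e_apply (i j : Fin k) : e k i j = if j = i then 1 else 0 := by
  simp [e, Pi.single_apply]

lemma pile {p q : Fin k → ℕ} (h : p ≤ q) (j : Fin k) : p j ≤ q j := h j

lemma le_e_iff {i : Fin k} {p : Fin k → ℕ} : p ≤ e k i ↔ p = 0 ∨ p = e k i := by
  constructor
  · intro h
    by_cases hp : p i = 0
    · left; funext j
      have hj := pile h j
      rw [e_apply] at hj
      show p j = 0
      by_cases hji : j = i
      · subst hji; exact hp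
      · rw [if_neg hji] at hj; omega
    · right; funext j
      have hj := pile h j
      rw [e_apply] at hj
      show p j = e k i j
      rw [e_apply]
      by_cases hji : j = i
      · rw [if_pos hji] at hj ⊢; subst hji; omega
      · rw [if_neg hji] at hj ⊢; omega
  · rintro (rfl | rfl)
    · intro j; exact Nat.zero_le _
    · exact le_rfl

lemma eq_ι_of_d_zero {lam : Λ.Path} (h : Λ.d lam = 0) : lam = Λ.ι (Λ.r lam) := by
  obtain ⟨p, _, hu⟩ := Λ.factor lam 0 0 (by simpa using h)
  have h1 : (Λ.ι (Λ.r lam), lam) = p := by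
    refine hu _ ⟨by rw [Λ.s_ι], ?_, Λ.d_ι _, h⟩
    exact Λ.comp_ι_left lam (by rw [Λ.s_ι])
  have h2 : (lam, Λ.ι (Λ.s lam)) = p := by
    refine hu _ ⟨by rw [Λ.r_ι], ?_, h, Λ.d_ι _⟩
    exact Λ.comp_ι_right lam (by rw [Λ.r_ι])
  have := h1.trans h2.symm
  exact (congrArg Prod.fst this).symm

lemma leAt_finite (hrf : Λ.RowFinite) (m : Fin k → ℕ) (v : Λ.Obj) :
    (Λ.leAt m v).Finite := by
  have hsub : Λ.leAt m v ⊆ ⋃ p ∈ Set.Icc (0 : Fin k → ℕ) m, Λ.degAt p v := by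
    rintro lam ⟨⟨hd, _⟩, hr⟩
    exact Set.mem_biUnion ⟨fun j => Nat.zero_le _, hd⟩ ⟨rfl, hr⟩
  exact Set.Finite.subset (Set.Finite.biUnion (Set.finite_Icc _ _) (fun p _ => hrf v p)) hsub

lemma leAt_zero (v : Λ.Obj) : Λ.leAt 0 v = {Λ.ι v} := by
  ext lam
  constructor
  · rintro ⟨⟨hd, _⟩, hr⟩
    have : Λ.d lam = 0 := le_antisymm hd (fun j => Nat.zero_le _)
    rw [eq_ι_of_d_zero this, hr]; rfl
  · rintro rfl
    refine ⟨⟨by rw [Λ.d_ι], fun i hi => ?_⟩, Λ.r_ι v⟩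
    exfalso
    simpa [Λ.d_ι, e_apply] using pile hi i

lemma leAt_e_of_nonempty {i : Fin k} {v : Λ.Obj} (h : (Λ.degAt (e k i) v).Nonempty) :
    Λ.leAt (e k i) v = Λ.degAt (e k i) v := by
  ext lam
  constructor
  · rintro ⟨⟨hd, hext⟩, hr⟩
    rcases le_e_iff.mp hd with h0 | he
    · exfalso
      have hlam : lam = Λ.ι v := by rw [eq_ι_of_d_zero h0, hr]
      have hempty := hext i (by rw [h0, zero_add])
      rw [hlam, Λ.s_ι] at hempty
      rw [hempty] at h
      exact Set.not_nonempty_empty h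
    · exact ⟨he, hr⟩
  · rintro ⟨hd, hr⟩
    refine ⟨⟨hd.le, fun j hj => ?_⟩, hr⟩
    exfalso
    have hjj := pile hj j
    have hji := pile hj i
    rw [hd] at hjj hji
    simp only [Pi.add_apply, e_apply] at hjj hji
    by_cases hij : j = i
    · subst hij; simp at hjj
    · simp [hij, Ne.symm hij] at hjj hji

lemma leAt_e_of_empty {i : Fin k} {v : Λ.Obj} (h : Λ.degAt (e k i) v = ∅) :
    Λ.leAt (e k i) v = {Λ.ι v} := by
  ext lam
  constructor
  · rintro ⟨⟨hd, _⟩, hr⟩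
    rcases le_e_iff.mp hd with h0 | he
    · rw [eq_ι_of_d_zero h0, hr]; rfl
    · exfalso
      have : lam ∈ Λ.degAt (e k i) v := ⟨he, hr⟩
      rw [h] at this
      exact this
  · rintro rfl
    refine ⟨⟨by rw [Λ.d_ι]; intro j; exact Nat.zero_le _, fun j hj => ?_⟩, Λ.r_ι v⟩
    have hd0 : Λ.d (Λ.ι v) = 0 := Λ.d_ι v
    have hj' : e k j ≤ e k i := by
      intro l; have h3 := pile hj l; rw [hd0] at h3
      simpa using h3
    have : j = i := by
      have h2 := pile hj' j
      rw [e_apply, e_apply, if_pos rfl] at h2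
      by_contra hne
      rw [if_neg hne] at h2
      omega
    subst this
    rw [Λ.s_ι]
    exact h

/-- Composition made total. -/
noncomputable def kcomp (Λ : KGraph k) (μ ν : Λ.Path) : Λ.Path := by
  classical exact if h : Λ.s μ = Λ.r ν then Λ.comp μ ν h else μ

lemma kcomp_eq {μ ν : Λ.Path} (h : Λ.s μ = Λ.r ν) : kcomp Λ μ ν = Λ.comp μ ν h := by
  simp [kcomp, h]


lemma e_self (i : Fin k) : e k i i = 1 := by rw [e_apply, if_pos rfl]

lemma e_ne {i j : Fin k} (h : j ≠ i) : e k i j = 0 := by rw [e_apply, if_neg h]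

lemma kcomp_mem_leAt {n : Fin k → ℕ} {i : Fin k} {v : Λ.Obj} {lam nu : Λ.Path}
    (hlam : lam ∈ Λ.leAt n v) (hnu : nu ∈ Λ.leAt (e k i) (Λ.s lam)) :
    kcomp Λ lam nu ∈ Λ.leAt (n + e k i) v := by
  have hc : Λ.s lam = Λ.r nu := hnu.2.symm
  rw [kcomp_eq hc]
  refine ⟨⟨?_, ?_⟩, by rw [Λ.r_comp]; exact hlam.2⟩
  · rw [Λ.d_comp]
    intro l
    have h1 := pile hlam.1.1 l
    have h2 := pile hnu.1.1 l
    simp only [Pi.add_apply]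
    omega
  · intro j hj
    rw [Λ.s_comp]
    rw [Λ.d_comp] at hj
    rcases le_e_iff.mp hnu.1.1 with h0 | he
    · -- d nu = 0, so s nu = s lam
      have hnus : Λ.s nu = Λ.s lam := by
        have h3 : nu = Λ.ι (Λ.r nu) := eq_ι_of_d_zero h0
        rw [h3, Λ.s_ι, hnu.2]
      rw [h0, add_zero] at hj
      by_cases hcase : Λ.d lam + e k j ≤ n
      · rw [hnus]; exact hlam.1.2 j hcase
      · have hji : j = i := by
          by_contra hne
          apply hcase
          intro l
          have h1 := pile hj l
          have h2 := pile hlam.1.1 l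
          simp only [Pi.add_apply] at h1 ⊢
          by_cases hlj : l = j
          · subst hlj
            rw [e_self] at h1 ⊢
            rw [e_ne hne] at h1
            omega
          · rw [e_ne hlj] at h1 ⊢
            omega
        subst hji
        exact hnu.1.2 j (by rw [h0, zero_add])
    · -- d nu = e k i
      have hdlam : Λ.d lam + e k j ≤ n := by
        intro l
        have h1 := pile hj l
        rw [he] at h1
        simp only [Pi.add_apply] at h1 ⊢
        omega
      have hempty := hlam.1.2 j hdlam
      by_cases hji : j = i
      · subst hji
        exact absurd (show nu ∈ Λ.degAt (e k j) (Λ.s lam) from ⟨he, hnu.2⟩)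
          (Set.eq_empty_iff_forall_notMem.mp hempty nu)
      · rw [Set.eq_empty_iff_forall_notMem]
        intro alpha halpha
        have hca : Λ.s nu = Λ.r alpha := halpha.2.symm
        obtain ⟨⟨beta, gam⟩, ⟨hcb, hcomp, hdb, hdg⟩, -⟩ :=
          Λ.factor (Λ.comp nu alpha hca) (e k j) (e k i)
            (by rw [Λ.d_comp, he, halpha.1, add_comm])
        have hrb : Λ.r beta = Λ.s lam := by
          have h4 := congrArg Λ.r hcomp
          rw [Λ.r_comp, Λ.r_comp] at h4
          rw [h4, hnu.2]
        exact (Set.eq_empty_iff_forall_notMem.mp hempty) beta ⟨hdb, hrb⟩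

lemma kcomp_inj {n : Fin k → ℕ} {i : Fin k} {v : Λ.Obj} {lam nu lam' nu' : Λ.Path}
    (hlam : lam ∈ Λ.leAt n v) (hnu : nu ∈ Λ.leAt (e k i) (Λ.s lam))
    (hlam' : lam' ∈ Λ.leAt n v) (hnu' : nu' ∈ Λ.leAt (e k i) (Λ.s lam'))
    (heq : kcomp Λ lam nu = kcomp Λ lam' nu') : lam = lam' ∧ nu = nu' := by
  have hc : Λ.s lam = Λ.r nu := hnu.2.symm
  have hc' : Λ.s lam' = Λ.r nu' := hnu'.2.symm
  rw [kcomp_eq hc, kcomp_eq hc'] at heq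
  have hdsum : Λ.d lam + Λ.d nu = Λ.d lam' + Λ.d nu' := by
    have h4 := congrArg Λ.d heq
    rwa [Λ.d_comp, Λ.d_comp] at h4
  have main : Λ.d lam = Λ.d lam' → Λ.d nu = Λ.d nu' → lam = lam' ∧ nu = nu' := by
    intro hdl hdn
    obtain ⟨p, -, hu⟩ := Λ.factor (Λ.comp lam nu hc) (Λ.d lam) (Λ.d nu) (by rw [Λ.d_comp])
    have e1 : (lam, nu) = p := hu _ ⟨hc, rfl, rfl, rfl⟩
    have e2 : (lam', nu') = p := hu _ ⟨hc', heq.symm, hdl.symm, hdn.symm⟩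
    have e3 := e1.trans e2.symm
    exact ⟨congrArg Prod.fst e3, congrArg Prod.snd e3⟩
  rcases le_e_iff.mp hnu.1.1 with h0 | he <;> rcases le_e_iff.mp hnu'.1.1 with h0' | he'
  · exact main (by rw [h0, add_zero, h0', add_zero] at hdsum; exact hdsum) (h0.trans h0'.symm)
  · exfalso
    have hdl : Λ.d lam = Λ.d lam' + e k i := by
      rw [h0, add_zero, he'] at hdsum; exact hdsum
    have h5 : Λ.d lam' + e k i ≤ n := by rw [← hdl]; exact hlam.1.1
    exact (Set.eq_empty_iff_forall_notMem.mp (hlam'.1.2 i h5)) nu' ⟨he', hnu'.2⟩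
  · exfalso
    have hdl : Λ.d lam' = Λ.d lam + e k i := by
      rw [h0', add_zero, he] at hdsum; exact hdsum.symm
    have h5 : Λ.d lam + e k i ≤ n := by rw [← hdl]; exact hlam'.1.1
    exact (Set.eq_empty_iff_forall_notMem.mp (hlam.1.2 i h5)) nu ⟨he, hnu.2⟩
  · refine main ?_ (he.trans he'.symm)
    rw [he, he'] at hdsum
    exact add_right_cancel hdsum

lemma exists_kcomp (hlc : Λ.LocallyConvex) {n : Fin k → ℕ} {i : Fin k} {v : Λ.Obj} {tau : Λ.Path}
    (htau : tau ∈ Λ.leAt (n + e k i) v) :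
    ∃ lam nu, lam ∈ Λ.leAt n v ∧ nu ∈ Λ.leAt (e k i) (Λ.s lam) ∧ kcomp Λ lam nu = tau := by
  have hdtau := htau.1.1
  have hdi : ∀ l, l ≠ i → Λ.d tau l ≤ n l := by
    intro l hl
    have h1 := pile hdtau l
    simp only [Pi.add_apply, e_ne hl] at h1
    omega
  have hdii : Λ.d tau i ≤ n i + 1 := by
    have h1 := pile hdtau i
    simp only [Pi.add_apply, e_self] at h1
    omega
  obtain ⟨⟨lam, nu⟩, ⟨hc, hcomp, hd1, hd2⟩, -⟩ :=
    Λ.factor tau (fun l => min (Λ.d tau l) (n l)) (fun l => Λ.d tau l - min (Λ.d tau l) (n l))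
      (by funext l; simp only [Pi.add_apply]; omega)
  have hd1c : ∀ l, Λ.d lam l = min (Λ.d tau l) (n l) := fun l => congrFun hd1 l
  have hd2c : ∀ l, Λ.d nu l = Λ.d tau l - min (Λ.d tau l) (n l) := fun l => congrFun hd2 l
  have hstau : Λ.s nu = Λ.s tau := by
    have h4 := congrArg Λ.s hcomp; rwa [Λ.s_comp] at h4
  have hrlam : Λ.r lam = v := by
    have h4 := congrArg Λ.r hcomp; rw [Λ.r_comp] at h4; rw [h4]; exact htau.2
  have hdlam : Λ.d lam ≤ n := by
    intro l
    have h5 := hd1c l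
    rw [h5]; exact min_le_right _ _
  refine ⟨lam, nu, ⟨⟨hdlam, ?_⟩, hrlam⟩, ⟨⟨?_, ?_⟩, hc.symm⟩, by rw [kcomp_eq hc]; exact hcomp⟩
  · -- extension condition for lam
    intro j hj
    by_cases hcase : Λ.d tau i ≤ n i
    · -- then d nu = 0, s lam = s tau
      have hto : ∀ l, Λ.d tau l ≤ n l := by
        intro l; by_cases hl : l = i
        · rw [hl]; exact hcase
        · exact hdi l hl
      have hd2' : Λ.d nu = 0 := by
        funext l
        have h5 := hd2c l
        have h6 := hto l
        simp only [Pi.zero_apply]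
        omega
      have hslam : Λ.s lam = Λ.s tau := by
        have hnuι : nu = Λ.ι (Λ.r nu) := eq_ι_of_d_zero hd2'
        rw [← hstau, hnuι, Λ.s_ι, ← hc]
      have htsub : Λ.d tau + e k j ≤ n + e k i := by
        intro l
        have h1 := pile hj l
        have h5 : Λ.d lam l = Λ.d tau l := by
          have h6 := hd1c l
          have h7 := hto l
          omega
        simp only [Pi.add_apply] at h1 ⊢
        rw [h5] at h1
        by_cases hl : l = i
        · subst hl; rw [e_self]; omega
        · rw [e_ne hl]; omega
      rw [hslam]
      exact htau.1.2 j htsub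
    · -- d tau i = n i + 1, d nu = e_i
      have hB : Λ.d tau i = n i + 1 := by omega
      have hd2' : Λ.d nu = e k i := by
        funext l
        have h5 := hd2c l
        by_cases hl : l = i
        · subst hl
          rw [e_self]
          omega
        · rw [e_ne hl]
          have h6 := hdi l hl
          omega
      have hji : ¬ j = i := by
        intro hh
        subst hh
        have h1 := pile hj j
        have h6 := hd1c j
        simp only [Pi.add_apply, e_self] at h1
        omega
      have htsub : Λ.d tau + e k j ≤ n + e k i := by
        intro l
        simp only [Pi.add_apply]
        by_cases hl : l = i
        · subst hl
          rw [e_self, e_ne (fun hh => hji hh.symm)]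
          omega
        · have h9 : Λ.d lam l = Λ.d tau l := by
            have h6 := hd1c l
            have h7 := hdi l hl
            omega
          have h1 := pile hj l
          simp only [Pi.add_apply] at h1
          rw [h9] at h1
          rw [e_ne hl]
          by_cases hlj : l = j
          · subst hlj; rw [e_self] at h1 ⊢; omega
          · rw [e_ne hlj] at h1 ⊢; omega
      have hempty := htau.1.2 j htsub
      rw [Set.eq_empty_iff_forall_notMem]
      intro alpha halpha
      have hnumem : nu ∈ Λ.degAt (e k i) (Λ.s lam) := ⟨hd2', hc.symm⟩
      have h10 := (hlc (Λ.s lam) i j (fun hh => hji hh.symm) nu alpha hnumem halpha).1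
      rw [hstau, hempty] at h10
      exact Set.not_nonempty_empty h10
  · -- d nu ≤ e_i
    intro l
    show Λ.d nu l ≤ e k i l
    have h5 := hd2c l
    by_cases hl : l = i
    · subst hl
      rw [e_self]
      omega
    · rw [e_ne hl]
      have h6 := hdi l hl
      omega
  · -- extension condition for nu
    intro j hj
    have hji : j = i := by
      by_contra hne
      have h1 := pile hj j
      simp only [Pi.add_apply, e_self, e_ne hne] at h1
      omega
    subst hji
    have hd2' : Λ.d nu j = 0 := by
      have h1 := pile hj j
      simp only [Pi.add_apply, e_self] at h1
      omega
    have hcase : Λ.d tau j ≤ n j := by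
      have h5 := hd2c j
      omega
    have hto : Λ.d tau + e k j ≤ n + e k j := by
      intro l
      simp only [Pi.add_apply]
      by_cases hl : l = j
      · subst hl; omega
      · have h6 := hdi l hl; omega
    rw [hstau]
    exact htau.1.2 j hto

section Alg

variable {A : Type} [Ring A] [StarRing A] {S : Λ.Path → A}

lemma sum_leAt_zero (h13 : Λ.IsCK13 S) (v : Λ.Obj) :
    S (Λ.ι v) = ∑ᶠ lam ∈ Λ.leAt 0 v, S lam * star (S lam) := by
  rw [leAt_zero, finsum_mem_singleton, h13.selfadj, h13.proj]

lemma edge_sum (h13 : Λ.IsCK13 S)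
    (hedge : ∀ (v : Λ.Obj) (i : Fin k), (Λ.degAt (e k i) v).Nonempty →
        S (Λ.ι v) = ∑ᶠ lam ∈ Λ.degAt (e k i) v, S lam * star (S lam))
    (v : Λ.Obj) (i : Fin k) :
    S (Λ.ι v) = ∑ᶠ nu ∈ Λ.leAt (e k i) v, S nu * star (S nu) := by
  by_cases h : (Λ.degAt (e k i) v).Nonempty
  · rw [leAt_e_of_nonempty h]; exact hedge v i h
  · rw [leAt_e_of_empty (Set.not_nonempty_iff_eq_empty.mp h), finsum_mem_singleton,
      h13.selfadj, h13.proj]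

lemma rel4_of_edge (hlc : Λ.LocallyConvex) (hrf : Λ.RowFinite) (h13 : Λ.IsCK13 S)
    (hedge : ∀ (v : Λ.Obj) (i : Fin k), (Λ.degAt (e k i) v).Nonempty →
        S (Λ.ι v) = ∑ᶠ lam ∈ Λ.degAt (e k i) v, S lam * star (S lam))
    (m : Fin k → ℕ) (v : Λ.Obj) :
    S (Λ.ι v) = ∑ᶠ lam ∈ Λ.leAt m v, S lam * star (S lam) := by
  classical
  have key : ∀ (N : ℕ) (m : Fin k → ℕ), (∑ j, m j) ≤ N → ∀ v : Λ.Obj,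
      S (Λ.ι v) = ∑ᶠ lam ∈ Λ.leAt m v, S lam * star (S lam) := by
    intro N
    induction N with
    | zero =>
      intro m hm v
      have hm0 : m = 0 := by
        funext j
        have h1 : m j ≤ ∑ j, m j := Finset.single_le_sum (fun _ _ => Nat.zero_le _)
          (Finset.mem_univ j)
        simp only [Pi.zero_apply]
        omega
      rw [hm0]
      exact sum_leAt_zero h13 v
    | succ N ih =>
      intro m hm v
      by_cases h0 : m = 0
      · rw [h0]; exact sum_leAt_zero h13 v
      · obtain ⟨i, hi⟩ : ∃ i, m i ≠ 0 := by
          by_contra hcon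
          push_neg at hcon
          exact h0 (funext fun j => hcon j)
        have hmn : m = (fun l => m l - e k i l) + e k i := by
          funext l
          simp only [Pi.add_apply]
          by_cases hl : l = i
          · subst hl; rw [e_self]; omega
          · rw [e_ne hl]; omega
        set n : Fin k → ℕ := fun l => m l - e k i l with hn
        have hnN : (∑ j, n j) ≤ N := by
          have h1 : (∑ j, m j) = (∑ j, n j) + (∑ j, e k i j) := by
            rw [hmn]
            exact Finset.sum_add_distrib
          have h2 : (∑ j, e k i j) = 1 := by
            simp [e, Finset.sum_pi_single']
          omega
        have hLfin := leAt_finite hrf n v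
        have hMfin := leAt_finite hrf (n + e k i) v
        have hNfin : ∀ lam : Λ.Path, (Λ.leAt (e k i) (Λ.s lam)).Finite :=
          fun lam => leAt_finite hrf (e k i) (Λ.s lam)
        have step1 : S (Λ.ι v) = ∑ lam ∈ hLfin.toFinset, S lam * star (S lam) := by
          rw [ih n hnN v, finsum_mem_eq_finite_toFinset_sum _ hLfin]
        have step2 : ∀ lam ∈ hLfin.toFinset, S lam * star (S lam)
            = ∑ nu ∈ (hNfin lam).toFinset,
                S (kcomp Λ lam nu) * star (S (kcomp Λ lam nu)) := by
          intro lam _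
          have hre : S lam = S lam * S (Λ.ι (Λ.s lam)) := by
            have h4 := h13.mul lam (Λ.ι (Λ.s lam)) (Λ.r_ι _).symm
            rwa [Λ.comp_ι_right lam (Λ.r_ι _).symm] at h4
          have hes := edge_sum h13 hedge (Λ.s lam) i
          rw [finsum_mem_eq_finite_toFinset_sum _ (hNfin lam)] at hes
          calc S lam * star (S lam)
              = S lam * S (Λ.ι (Λ.s lam)) * star (S lam) := by rw [← hre]
            _ = S lam * (∑ nu ∈ (hNfin lam).toFinset, S nu * star (S nu)) * star (S lam) := by
                rw [← hes]
            _ = ∑ nu ∈ (hNfin lam).toFinset, S lam * (S nu * star (S nu)) * star (S lam) := by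
                rw [Finset.mul_sum, Finset.sum_mul]
            _ = ∑ nu ∈ (hNfin lam).toFinset,
                  S (kcomp Λ lam nu) * star (S (kcomp Λ lam nu)) := by
                refine Finset.sum_congr rfl (fun nu hnu => ?_)
                have hmem : nu ∈ Λ.leAt (e k i) (Λ.s lam) :=
                  (Set.Finite.mem_toFinset _).mp hnu
                have hc : Λ.s lam = Λ.r nu := hmem.2.symm
                rw [kcomp_eq hc, h13.mul lam nu hc, star_mul]
                simp only [mul_assoc]
        have step4 : ∑ p ∈ hLfin.toFinset.sigma (fun lam => (hNfin lam).toFinset),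
              S (kcomp Λ p.1 p.2) * star (S (kcomp Λ p.1 p.2))
            = ∑ tau ∈ hMfin.toFinset, S tau * star (S tau) := by
          refine Finset.sum_bij (fun p _ => kcomp Λ p.1 p.2) ?_ ?_ ?_ ?_
          · intro p hp
            rw [Finset.mem_sigma] at hp
            rw [Set.Finite.mem_toFinset]
            exact kcomp_mem_leAt ((Set.Finite.mem_toFinset _).mp hp.1)
              ((Set.Finite.mem_toFinset _).mp hp.2)
          · intro p hp q hq heq
            rw [Finset.mem_sigma] at hp hq
            obtain ⟨h1, h2⟩ := kcomp_inj ((Set.Finite.mem_toFinset _).mp hp.1)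
              ((Set.Finite.mem_toFinset _).mp hp.2)
              ((Set.Finite.mem_toFinset _).mp hq.1)
              ((Set.Finite.mem_toFinset _).mp hq.2) heq
            rcases p with ⟨a, b⟩
            rcases q with ⟨c, d⟩
            cases h1
            cases h2
            rfl
          · intro tau htau
            rw [Set.Finite.mem_toFinset] at htau
            obtain ⟨lam, nu, h1, h2, h3⟩ := exists_kcomp hlc htau
            exact ⟨⟨lam, nu⟩, Finset.mem_sigma.mpr ⟨(Set.Finite.mem_toFinset _).mpr h1,
              (Set.Finite.mem_toFinset _).mpr h2⟩, h3⟩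
          · intro p hp
            rfl
        rw [show m = n + e k i from hmn,
          finsum_mem_eq_finite_toFinset_sum _ hMfin, ← step4, step1]
        rw [Finset.sum_sigma]
        exact Finset.sum_congr rfl step2
  exact key (∑ j, m j) m le_rfl v

end Alg

end KGraphAux

end Aux

/-- for a locally convex row-finite `k`-graph and a family of
partial isometries satisfying Cuntz-Krieger relations (1)-(3), relation (4)
holds iff the edge relations hold. -/
theorem stmt10 {k : ℕ} (Λ : KGraph k) (hlc : Λ.LocallyConvex) (hrf : Λ.RowFinite)
    {A : Type} [Ring A] [StarRing A] (S : Λ.Path → A) (h13 : Λ.IsCK13 S) :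
    (∀ (v : Λ.Obj) (m : Fin k → ℕ),
        S (Λ.ι v) = ∑ᶠ lam ∈ Λ.leAt m v, S lam * star (S lam)) ↔
    (∀ (v : Λ.Obj) (i : Fin k), (Λ.degAt (KGraph.e k i) v).Nonempty →
        S (Λ.ι v) = ∑ᶠ lam ∈ Λ.degAt (KGraph.e k i) v, S lam * star (S lam)) := by
  constructor
  · intro h4 v i hne
    rw [← KGraphAux.leAt_e_of_nonempty hne]
    exact h4 v (KGraph.e k i)
  · intro hedge v m
    exact KGraphAux.rel4_of_edge hlc hrf h13 hedge m v
end

section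
/- In the 2-graph with a single vertex-pair structure given by vertices v,w,z, an edge e of degree (1,0) from w to v, and an edge f of degree (0,1) from z to v (with no other edges), every Cuntz-Krieger family {s_λ} is identically zero: the relations for m=(1,0), m=(0,1), and m=(1,1) force s_v = s_e s_e* = s_f s_f* and s_v = s_e s_e* + s_f s_f*, hence s_v = 0 and all s_λ = 0. -/
open scoped ENNReal

/-- in the 2-graph with vertices `v, w, z`, a single edge `e` of
degree `(1,0)` from `w` to `v` and a single edge `f` of degree `(0,1)` from `z`
to `v` and no other nontrivial paths, every Cuntz-Krieger family is zero. -/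
theorem stmt11 (Λ : KGraph 2) (v w z : Λ.Obj) (e f : Λ.Path)
    (hvw : v ≠ w) (hvz : v ≠ z) (hwz : w ≠ z)
    (hobj : ∀ u : Λ.Obj, u = v ∨ u = w ∨ u = z)
    (hde : Λ.d e = KGraph.e 2 0) (hre : Λ.r e = v) (hse : Λ.s e = w)
    (hdf : Λ.d f = KGraph.e 2 1) (hrf : Λ.r f = v) (hsf : Λ.s f = z)
    (he : ∀ lam : Λ.Path, Λ.d lam = KGraph.e 2 0 → lam = e)
    (hf : ∀ lam : Λ.Path, Λ.d lam = KGraph.e 2 1 → lam = f)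
    (hdeg : ∀ lam : Λ.Path,
      Λ.d lam = 0 ∨ Λ.d lam = KGraph.e 2 0 ∨ Λ.d lam = KGraph.e 2 1)
    {A : Type} [Ring A] [StarRing A] (S : Λ.Path → A) (hS : Λ.IsCKFamily S) :
    ∀ lam : Λ.Path, S lam = 0 := by
  classical
  have hef : e ≠ f := by
    intro h
    rw [h, hdf] at hde
    have := congrFun hde 0
    simp [KGraph.e, Pi.single_apply] at this
  -- degree-zero paths are identities
  have hzero : ∀ lam : Λ.Path, Λ.d lam = 0 → lam = Λ.ι (Λ.r lam) := by
    intro lam h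
    obtain ⟨p, _, hu⟩ := Λ.factor lam 0 0 (by simp [h])
    have h1 : (Λ.ι (Λ.r lam), lam) = p :=
      hu _ ⟨by rw [Λ.s_ι], Λ.comp_ι_left lam _, Λ.d_ι _, h⟩
    have h2 : (lam, Λ.ι (Λ.s lam)) = p :=
      hu _ ⟨by rw [Λ.r_ι], Λ.comp_ι_right lam _, h, Λ.d_ι _⟩
    exact (congrArg Prod.fst (h1.trans h2.symm)).symm
  have hE1w : Λ.degAt (KGraph.e 2 1) w = ∅ := by
    ext lam
    simp only [KGraph.degAt, Set.mem_setOf_eq, Set.mem_empty_iff_false, iff_false, not_and]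
    intro hd hr
    rw [hf lam hd] at hr
    exact hvw (hrf.symm.trans hr)
  have hE0z : Λ.degAt (KGraph.e 2 0) z = ∅ := by
    ext lam
    simp only [KGraph.degAt, Set.mem_setOf_eq, Set.mem_empty_iff_false, iff_false, not_and]
    intro hd hr
    rw [he lam hd] at hr
    exact hvz (hre.symm.trans hr)
  have hE0v : e ∈ Λ.degAt (KGraph.e 2 0) v := ⟨hde, hre⟩
  have hE1v : f ∈ Λ.degAt (KGraph.e 2 1) v := ⟨hdf, hrf⟩
  have hA : Λ.leAt (KGraph.e 2 0) v = {e} := by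
    ext lam
    simp only [KGraph.leAt, KGraph.le, Set.mem_setOf_eq, Set.mem_singleton_iff]
    constructor
    · rintro ⟨⟨hdle, hext⟩, hr⟩
      rcases hdeg lam with h0 | h1 | h2
      · exfalso
        have hs : Λ.s lam = v := by rw [hzero lam h0, Λ.s_ι, hr]
        have := hext 0 (by rw [h0]; simp)
        rw [← hs, this] at hE0v
        exact hE0v
      · exact he lam h1
      · exfalso
        have := hdle 1
        rw [h2] at this
        simp [KGraph.e, Pi.single_apply] at this
    · rintro rfl
      refine ⟨⟨le_of_eq hde, ?_⟩, hre⟩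
      intro i hi
      exfalso
      have := hi i
      simp only [Pi.add_apply, hde] at this
      fin_cases i <;> simp [KGraph.e, Pi.single_apply] at this
  have hB : Λ.leAt (KGraph.e 2 1) v = {f} := by
    ext lam
    simp only [KGraph.leAt, KGraph.le, Set.mem_setOf_eq, Set.mem_singleton_iff]
    constructor
    · rintro ⟨⟨hdle, hext⟩, hr⟩
      rcases hdeg lam with h0 | h1 | h2
      · exfalso
        have hs : Λ.s lam = v := by rw [hzero lam h0, Λ.s_ι, hr]
        have := hext 1 (by rw [h0]; simp)
        rw [← hs, this] at hE1v
        exact hE1v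
      · exfalso
        have := hdle 0
        rw [h1] at this
        simp [KGraph.e, Pi.single_apply] at this
      · exact hf lam h2
    · rintro rfl
      refine ⟨⟨le_of_eq hdf, ?_⟩, hrf⟩
      intro i hi
      exfalso
      have := hi i
      simp only [Pi.add_apply, hdf] at this
      fin_cases i <;> simp [KGraph.e, Pi.single_apply] at this
  have hC : Λ.leAt (KGraph.e 2 0 + KGraph.e 2 1) v = {e, f} := by
    ext lam
    simp only [KGraph.leAt, KGraph.le, Set.mem_setOf_eq, Set.mem_insert_iff,
      Set.mem_singleton_iff]
    constructor
    · rintro ⟨⟨hdle, hext⟩, hr⟩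
      rcases hdeg lam with h0 | h1 | h2
      · exfalso
        have hs : Λ.s lam = v := by rw [hzero lam h0, Λ.s_ι, hr]
        have := hext 0 (by
          rw [h0]
          intro i
          fin_cases i <;> simp [KGraph.e, Pi.single_apply])
        rw [← hs, this] at hE0v
        exact hE0v
      · exact Or.inl (he lam h1)
      · exact Or.inr (hf lam h2)
    · rintro (rfl | rfl)
      · refine ⟨⟨?_, ?_⟩, hre⟩
        · intro i
          rw [hde]
          fin_cases i <;> simp [KGraph.e, Pi.single_apply]
        · intro i hi
          fin_cases i
          · exfalso
            have := hi 0
            simp [hde, KGraph.e, Pi.single_apply] at this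
          · rw [hse]
            exact hE1w
      · refine ⟨⟨?_, ?_⟩, hrf⟩
        · intro i
          rw [hdf]
          fin_cases i <;> simp [KGraph.e, Pi.single_apply]
        · intro i hi
          fin_cases i
          · rw [hsf]
            exact hE0z
          · exfalso
            have := hi 1
            simp [hdf, KGraph.e, Pi.single_apply] at this
  have h1 := hS.sum v (KGraph.e 2 0)
  rw [hA, finsum_mem_singleton] at h1
  have h2 := hS.sum v (KGraph.e 2 1)
  rw [hB, finsum_mem_singleton] at h2
  have h3 := hS.sum v (KGraph.e 2 0 + KGraph.e 2 1)
  rw [hC, finsum_mem_pair hef, ← h1, ← h2] at h3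
  have hv0 : S (Λ.ι v) = 0 := by
    have := h3.symm
    rwa [add_eq_left] at this
  have hrange : ∀ lam : Λ.Path, S lam = S (Λ.ι (Λ.r lam)) * S lam := by
    intro lam
    have h := Λ.comp_ι_left lam (by rw [Λ.s_ι])
    calc S lam = S (Λ.comp (Λ.ι (Λ.r lam)) lam (by rw [Λ.s_ι])) := by rw [h]
      _ = S (Λ.ι (Λ.r lam)) * S lam := hS.mul _ _ _
  have hSe : S e = 0 := by
    rw [hrange e, hre, hv0, zero_mul]
  have hSf : S f = 0 := by
    rw [hrange f, hrf, hv0, zero_mul]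
  have hw0 : S (Λ.ι w) = 0 := by
    have := hS.src e
    rw [hse, hSe, mul_zero] at this
    exact this.symm
  have hz0 : S (Λ.ι z) = 0 := by
    have := hS.src f
    rw [hsf, hSf, mul_zero] at this
    exact this.symm
  intro lam
  rw [hrange lam]
  rcases hobj (Λ.r lam) with h | h | h <;> rw [h]
  · rw [hv0, zero_mul]
  · rw [hw0, zero_mul]
  · rw [hz0, zero_mul]
end

section
/- Let Λ be a locally convex k-graph. Then for every vertex v, the set Λ^{≤∞}(v) of boundary paths with range v is nonempty. -/
open scoped ENNReal

section Aux

namespace KGraph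

variable {k : ℕ} (Λ : KGraph k)

/-- Uniqueness part of factorisation. -/
lemma factor_unique {lam α β α' β' : Λ.Path} {m n : Fin k → ℕ}
    (hd : Λ.d lam = m + n)
    (h1 : Λ.s α = Λ.r β) (h2 : Λ.comp α β h1 = lam) (h3 : Λ.d α = m) (h4 : Λ.d β = n)
    (h1' : Λ.s α' = Λ.r β') (h2' : Λ.comp α' β' h1' = lam) (h3' : Λ.d α' = m)
    (h4' : Λ.d β' = n) : α = α' ∧ β = β' := by
  obtain ⟨p, -, hp⟩ := Λ.factor lam m n hd
  have e1 : (α, β) = p := hp (α, β) ⟨h1, h2, h3, h4⟩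
  have e2 : (α', β') = p := hp (α', β') ⟨h1', h2', h3', h4'⟩
  rw [← e2] at e1
  exact ⟨congrArg Prod.fst e1, congrArg Prod.snd e1⟩

lemma comp_congr {α α' β β' : Λ.Path} (hα : α = α') (hβ : β = β') (h : Λ.s α = Λ.r β) :
    Λ.comp α β h = Λ.comp α' β' (hα ▸ hβ ▸ h) := by subst hα; subst hβ; rfl

/-- A path of degree zero is the identity at its range. -/
lemma eq_iota_of_d_eq_zero {α : Λ.Path} (h : Λ.d α = 0) : α = Λ.ι (Λ.r α) := by
  have hd : Λ.d α = 0 + 0 := by simp [h]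
  have h1 : Λ.s (Λ.ι (Λ.r α)) = Λ.r α := Λ.s_ι _
  have h2 : Λ.comp (Λ.ι (Λ.r α)) α h1 = α := Λ.comp_ι_left α h1
  have h1' : Λ.s α = Λ.r (Λ.ι (Λ.s α)) := (Λ.r_ι _).symm
  have h2' : Λ.comp α (Λ.ι (Λ.s α)) h1' = α := Λ.comp_ι_right α h1'
  exact (Λ.factor_unique hd h1' h2' h (by simp [Λ.d_ι]) h1 h2 (Λ.d_ι _) h).1

lemma s_eq_r_of_d_eq_zero {α : Λ.Path} (h : Λ.d α = 0) : Λ.s α = Λ.r α := by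
  conv_lhs => rw [Λ.eq_iota_of_d_eq_zero h]
  exact Λ.s_ι _

/-- Split off an initial segment of degree `m`. -/
lemma exists_split {lam : Λ.Path} {m n : Fin k → ℕ} (hd : Λ.d lam = m + n) :
    ∃ (α β : Λ.Path) (h : Λ.s α = Λ.r β),
      Λ.comp α β h = lam ∧ Λ.d α = m ∧ Λ.d β = n := by
  obtain ⟨p, ⟨h, h2, h3, h4⟩, -⟩ := Λ.factor lam m n hd
  exact ⟨p.1, p.2, h, h2, h3, h4⟩

/-- If `Λ^{e_i}(r μ)` is empty then `d μ i = 0`. -/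
lemma d_eq_zero_of_degAt_empty {μ : Λ.Path} {i : Fin k}
    (h : Λ.degAt (e k i) (Λ.r μ) = ∅) : Λ.d μ i = 0 := by
  by_contra hne
  have hd : Λ.d μ = e k i + (Λ.d μ - e k i) := by
    funext j; simp only [Pi.add_apply, Pi.sub_apply, e, Pi.single_apply]
    by_cases hj : j = i <;> simp [hj] <;> omega
  obtain ⟨α, β, hc, hcomp, hα, hβ⟩ := Λ.exists_split hd
  have : α ∈ Λ.degAt (e k i) (Λ.r μ) := ⟨hα, by rw [← hcomp, Λ.r_comp]⟩
  simp [h] at this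

end KGraph

end Aux
section Aux2

namespace KGraph

variable {k : ℕ} (Λ : KGraph k)

lemma sum_e (i : Fin k) : ∑ j, e k i j = 1 := by
  simp [e, Finset.sum_pi_single']

/-- Key lemma: along a path with no `i`-degree, the (non)existence of edges of
degree `e i` propagates (both ways, by local convexity). -/
lemma keyLC (hlc : Λ.LocallyConvex) {i : Fin k} :
    ∀ (N : ℕ) (ν : Λ.Path), (∑ j, Λ.d ν j) ≤ N → Λ.d ν i = 0 →
      ((Λ.degAt (e k i) (Λ.r ν)).Nonempty ↔ (Λ.degAt (e k i) (Λ.s ν)).Nonempty) := by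
  intro N
  induction N with
  | zero =>
    intro ν hN _
    have hd0 : Λ.d ν = 0 := by
      funext j
      have := Finset.sum_eq_zero_iff.mp (Nat.le_zero.mp hN) j (Finset.mem_univ j)
      simpa using this
    rw [Λ.s_eq_r_of_d_eq_zero hd0]
  | succ N ih =>
    intro ν hN hi
    by_cases hd0 : Λ.d ν = 0
    · rw [Λ.s_eq_r_of_d_eq_zero hd0]
    · have hj : ∃ j, 0 < Λ.d ν j := by
        by_contra h
        push_neg at h
        exact hd0 (funext fun j => Nat.le_zero.mp (h j))
      obtain ⟨j, hjpos⟩ := hj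
      have hij : i ≠ j := by rintro rfl; omega
      have hd : Λ.d ν = e k j + (Λ.d ν - e k j) := by
        funext j'
        simp only [Pi.add_apply, Pi.sub_apply, e, Pi.single_apply]
        by_cases hj' : j' = j <;> simp [hj'] <;> omega
      obtain ⟨f, ν', hc, hcomp, hf, hν'⟩ := Λ.exists_split hd
      have hrf : Λ.r f = Λ.r ν := by rw [← hcomp, Λ.r_comp]
      have hsν : Λ.s ν' = Λ.s ν := by rw [← hcomp, Λ.s_comp]
      have hν'i : Λ.d ν' i = 0 := by
        have := congrFun hd i
        have he : e k j i = 0 := by simp [e, Pi.single_apply, hij]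
        simp only [Pi.add_apply, Pi.sub_apply] at this
        rw [hν']
        simp only [Pi.sub_apply]
        omega
      have hsum' : (∑ j', Λ.d ν' j') ≤ N := by
        have : (∑ j', Λ.d ν j') = 1 + ∑ j', Λ.d ν' j' := by
          conv_lhs => rw [hd]
          rw [← hν']
          simp [Finset.sum_add_distrib, sum_e]
        omega
      have step : (Λ.degAt (e k i) (Λ.r f)).Nonempty ↔
          (Λ.degAt (e k i) (Λ.s f)).Nonempty := by
        constructor
        · rintro ⟨lam, hlam⟩
          exact (hlc (Λ.r f) i j hij lam f hlam ⟨hf, rfl⟩).2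
        · rintro ⟨g, hg⟩
          have hcg : Λ.s f = Λ.r g := hg.2.symm
          have hdg : Λ.d (Λ.comp f g hcg) = e k i + e k j := by
            rw [Λ.d_comp, hf, hg.1, add_comm]
          obtain ⟨α, β, hαβ, hcomp2, hα, hβ⟩ := Λ.exists_split hdg
          refine ⟨α, hα, ?_⟩
          rw [← Λ.r_comp f g hcg, ← hcomp2, Λ.r_comp]
      rw [← hrf, ← hsν]
      have ih' := ih ν' hsum' hν'i
      rw [← hc] at ih'
      exact step.trans ih'

/-- Existence of elements of `Λ^{≤q}(w)` in a locally convex graph. -/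
lemma exists_leAt (hlc : Λ.LocallyConvex) :
    ∀ (N : ℕ) (q : Fin k → ℕ), (∑ j, q j) ≤ N → ∀ w : Λ.Obj,
      ∃ lam, lam ∈ Λ.leAt q w := by
  intro N
  induction N with
  | zero =>
    intro q hN w
    have hq0 : q = 0 := funext fun j =>
      Nat.le_zero.mp (by simpa using Finset.sum_eq_zero_iff.mp (Nat.le_zero.mp hN) j (Finset.mem_univ j))
    refine ⟨Λ.ι w, ⟨⟨by simp [Λ.d_ι, hq0], fun i hle => ?_⟩, Λ.r_ι w⟩⟩
    exfalso
    have := hle i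
    simp [Λ.d_ι, hq0, e, Pi.single_apply] at this
  | succ N ih =>
    intro q hN w
    by_cases hq0 : q = 0
    · refine ⟨Λ.ι w, ⟨⟨by simp [Λ.d_ι, hq0], fun i hle => ?_⟩, Λ.r_ι w⟩⟩
      exfalso
      have := hle i
      simp [Λ.d_ι, hq0, e, Pi.single_apply] at this
    · have hj : ∃ i, 0 < q i := by
        by_contra h
        push_neg at h
        exact hq0 (funext fun j => Nat.le_zero.mp (h j))
      obtain ⟨i, hipos⟩ := hj
      rcases Set.eq_empty_or_nonempty (Λ.degAt (e k i) w) with hemp | ⟨f, hf, hrf⟩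
      · -- no edge of degree e i at w; zero out the i-th coordinate
        set q' : Fin k → ℕ := fun j => if j = i then 0 else q j with hq'
        have hsum' : (∑ j, q' j) ≤ N := by
          have h1 : (∑ j, q j) = q i + ∑ j ∈ Finset.univ.erase i, q j :=
            (Finset.add_sum_erase _ q (Finset.mem_univ i)).symm
          have h2 : (∑ j, q' j) = q' i + ∑ j ∈ Finset.univ.erase i, q' j :=
            (Finset.add_sum_erase _ q' (Finset.mem_univ i)).symm
          have h3 : (∑ j ∈ Finset.univ.erase i, q' j) = ∑ j ∈ Finset.univ.erase i, q j := by
            apply Finset.sum_congr rfl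
            intro j hj
            simp [hq', (Finset.mem_erase.mp hj).1]
          have h4 : q' i = 0 := by simp [hq']
          omega
        obtain ⟨μ, ⟨hμd, hμcond⟩, hμr⟩ := ih q' hsum' w
        have hμi : Λ.d μ i = 0 := by
          have := hμd i
          simpa [hq'] using this
        refine ⟨μ, ⟨⟨fun j => le_trans (hμd j) (by by_cases hji : j = i <;> simp [hq', hji]), ?_⟩, hμr⟩⟩
        intro j hle
        by_cases hji : j = i
        · subst hji
          rw [← Set.not_nonempty_iff_eq_empty]
          intro hne
          have := (Λ.keyLC hlc (∑ j', Λ.d μ j') μ le_rfl hμi).mpr hne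
          rw [hμr] at this
          rw [hemp] at this
          exact Set.not_nonempty_empty this
        · apply hμcond j
          intro j'
          have h5 := hle j'
          have h6 := hμd j'
          simp only [Pi.add_apply, hq', e, Pi.single_apply] at h5 h6 ⊢
          split_ifs at h5 h6 ⊢ <;> omega
      · -- extend by f and induct
        obtain ⟨μ, ⟨hμd, hμcond⟩, hμr⟩ := ih (q - e k i)
          (by
            have h1 : (∑ j, (q - e k i) j) + 1 = ∑ j, q j := by
              rw [← sum_e (k := k) i, ← Finset.sum_add_distrib]
              apply Finset.sum_congr rfl
              intro j _
              simp only [Pi.sub_apply, e, Pi.single_apply]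
              by_cases hji : j = i <;> simp [hji] <;> omega
            omega) (Λ.s f)
        have hcf : Λ.s f = Λ.r μ := hμr.symm
        refine ⟨Λ.comp f μ hcf, ⟨⟨?_, ?_⟩, by rw [Λ.r_comp, hrf]⟩⟩
        · intro j
          have h1 := hμd j
          have h2 := congrFun (Λ.d_comp f μ hcf) j
          simp only [Pi.add_apply] at h2
          rw [hf] at h2
          simp only [Pi.sub_apply, e, Pi.single_apply] at h1 h2 ⊢
          rcases eq_or_ne j i with rfl | hji
          · simp only [if_true, eq_self_iff_true] at h1 h2; omega
          · simp only [if_neg hji] at h1 h2; omega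
        · intro j hle
          rw [Λ.s_comp]
          apply hμcond j
          intro j'
          have h5 := hle j'
          have h2 := congrFun (Λ.d_comp f μ hcf) j'
          simp only [Pi.add_apply] at h2 h5
          rw [hf] at h2
          simp only [Pi.add_apply, Pi.sub_apply, e, Pi.single_apply] at h5 h2 ⊢
          split_ifs at h5 h2 ⊢ <;> omega

end KGraph

end Aux2
section Aux3

namespace KGraph

variable {k : ℕ} (Λ : KGraph k)

/-- A chosen element of `Λ^{≤(1,…,1)}(w)`. -/
noncomputable def ext (hlc : Λ.LocallyConvex) (w : Λ.Obj) : Λ.Path :=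
  (Λ.exists_leAt hlc (∑ _j : Fin k, 1) (fun _ => 1) le_rfl w).choose

lemma ext_mem (hlc : Λ.LocallyConvex) (w : Λ.Obj) :
    Λ.ext hlc w ∈ Λ.leAt (fun _ => 1) w :=
  (Λ.exists_leAt hlc (∑ _j : Fin k, 1) (fun _ => 1) le_rfl w).choose_spec

/-- The inductively chosen sequence of paths starting at `v`. -/
noncomputable def seq (hlc : Λ.LocallyConvex) (v : Λ.Obj) : ℕ → Λ.Path
  | 0 => Λ.ι v
  | n + 1 => Λ.comp (seq hlc v n) (Λ.ext hlc (Λ.s (seq hlc v n)))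
      ((Λ.ext_mem hlc (Λ.s (seq hlc v n))).2.symm)

variable (hlc : Λ.LocallyConvex) (v : Λ.Obj)

lemma seq_succ_def (n : ℕ) :
    Λ.seq hlc v (n + 1) = Λ.comp (Λ.seq hlc v n) (Λ.ext hlc (Λ.s (Λ.seq hlc v n)))
      ((Λ.ext_mem hlc (Λ.s (Λ.seq hlc v n))).2.symm) := by
  simp only [seq]

lemma r_seq (n : ℕ) : Λ.r (Λ.seq hlc v n) = v := by
  induction n with
  | zero => exact Λ.r_ι v
  | succ n ih => rw [Λ.seq_succ_def hlc v n, Λ.r_comp, ih]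

lemma d_seq_succ (n : ℕ) :
    Λ.d (Λ.seq hlc v (n + 1)) =
      Λ.d (Λ.seq hlc v n) + Λ.d (Λ.ext hlc (Λ.s (Λ.seq hlc v n))) := by
  rw [Λ.seq_succ_def hlc v n, Λ.d_comp]

lemma d_seq_mono : Monotone (fun n => Λ.d (Λ.seq hlc v n)) := by
  apply monotone_nat_of_le_succ
  intro n
  rw [Λ.d_seq_succ hlc v n]
  exact le_add_of_nonneg_right (by positivity)

lemma seq_prefix {m n : ℕ} (hmn : m ≤ n) :
    ∃ (ν : Λ.Path) (h : Λ.s (Λ.seq hlc v m) = Λ.r ν),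
      Λ.comp (Λ.seq hlc v m) ν h = Λ.seq hlc v n := by
  induction n, hmn using Nat.le_induction with
  | base =>
    exact ⟨Λ.ι (Λ.s (Λ.seq hlc v m)), (Λ.r_ι _).symm, Λ.comp_ι_right _ _⟩
  | succ n hmn ih =>
    obtain ⟨ν, h, hcomp⟩ := ih
    have hsν : Λ.s ν = Λ.r (Λ.ext hlc (Λ.s (Λ.seq hlc v n))) := by
      rw [← Λ.s_comp _ _ h, hcomp, (Λ.ext_mem hlc _).2]
    have h3 : Λ.s (Λ.comp (Λ.seq hlc v m) ν h) =
        Λ.r (Λ.ext hlc (Λ.s (Λ.seq hlc v n))) := by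
      rw [Λ.s_comp]; exact hsν
    have h4 : Λ.s (Λ.seq hlc v m) =
        Λ.r (Λ.comp ν (Λ.ext hlc (Λ.s (Λ.seq hlc v n))) hsν) := by
      rw [Λ.r_comp]; exact h
    refine ⟨_, h4, ?_⟩
    rw [← Λ.comp_assoc _ _ _ h hsν h3 h4, Λ.seq_succ_def hlc v n]
    exact Λ.comp_congr hcomp rfl h3

/-- If the `i`-th degree stalls at step `n+1`, there are no `e i` edges at the
source of `seq (n+1)`. -/
lemma seq_stall {n : ℕ} {i : Fin k}
    (hst : Λ.d (Λ.seq hlc v (n + 1)) i = Λ.d (Λ.seq hlc v n) i) :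
    Λ.degAt (e k i) (Λ.s (Λ.seq hlc v (n + 1))) = ∅ := by
  set μ := Λ.ext hlc (Λ.s (Λ.seq hlc v n)) with hμ
  have hd0 : Λ.d μ i = 0 := by
    have h2 := congrFun (Λ.d_seq_succ hlc v n) i
    rw [← hμ] at h2
    simp only [Pi.add_apply] at h2
    omega
  have hcond := (Λ.ext_mem hlc (Λ.s (Λ.seq hlc v n))).1.2 i
  have hle : Λ.d μ + e k i ≤ (fun _ => 1) := by
    intro j
    have h1 : Λ.d μ j ≤ 1 := (Λ.ext_mem hlc (Λ.s (Λ.seq hlc v n))).1.1 j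
    show Λ.d μ j + e k i j ≤ 1
    simp only [e, Pi.single_apply]
    rcases eq_or_ne j i with rfl | hji
    · simp [hd0]
    · simp [hji]; omega
  have h3 := hcond hle
  rw [Λ.seq_succ_def hlc v n, Λ.s_comp, ← hμ]
  exact h3

end KGraph

end Aux3
section Aux4

namespace KGraph

variable {k : ℕ} (Λ : KGraph k) (hlc : Λ.LocallyConvex) (v : Λ.Obj)

lemma exists_headTail (n : ℕ) (p : Fin k → ℕ) (hp : p ≤ Λ.d (Λ.seq hlc v n)) :
    ∃ αβ : Λ.Path × Λ.Path, ∃ h : Λ.s αβ.1 = Λ.r αβ.2,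
      Λ.comp αβ.1 αβ.2 h = Λ.seq hlc v n ∧ Λ.d αβ.1 = p ∧
        Λ.d αβ.2 = Λ.d (Λ.seq hlc v n) - p := by
  have hd : Λ.d (Λ.seq hlc v n) = p + (Λ.d (Λ.seq hlc v n) - p) := by
    funext j
    have h9 : p j ≤ Λ.d (Λ.seq hlc v n) j := hp j
    simp only [Pi.add_apply, Pi.sub_apply]
    omega
  obtain ⟨α, β, h, hc, hα, hβ⟩ := Λ.exists_split hd
  exact ⟨(α, β), h, hc, hα, hβ⟩

/-- The initial segment of `seq n` of degree `p`. -/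
noncomputable def head (n : ℕ) (p : Fin k → ℕ) (hp : p ≤ Λ.d (Λ.seq hlc v n)) :
    Λ.Path :=
  (Λ.exists_headTail hlc v n p hp).choose.1

/-- The complementary final segment. -/
noncomputable def tail (n : ℕ) (p : Fin k → ℕ) (hp : p ≤ Λ.d (Λ.seq hlc v n)) :
    Λ.Path :=
  (Λ.exists_headTail hlc v n p hp).choose.2

lemma headTail_spec (n : ℕ) (p : Fin k → ℕ) (hp : p ≤ Λ.d (Λ.seq hlc v n)) :
    ∃ h : Λ.s (Λ.head hlc v n p hp) = Λ.r (Λ.tail hlc v n p hp),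
      Λ.comp _ _ h = Λ.seq hlc v n ∧ Λ.d (Λ.head hlc v n p hp) = p ∧
        Λ.d (Λ.tail hlc v n p hp) = Λ.d (Λ.seq hlc v n) - p :=
  (Λ.exists_headTail hlc v n p hp).choose_spec

/-- Uniqueness of the head/tail decomposition. -/
lemma eq_head {n : ℕ} {p : Fin k → ℕ} (hp : p ≤ Λ.d (Λ.seq hlc v n))
    {α β : Λ.Path} (h : Λ.s α = Λ.r β) (hc : Λ.comp α β h = Λ.seq hlc v n)
    (hα : Λ.d α = p) :
    α = Λ.head hlc v n p hp ∧ β = Λ.tail hlc v n p hp := by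
  obtain ⟨h', hc', hα', hβ'⟩ := Λ.headTail_spec hlc v n p hp
  have hd : Λ.d (Λ.seq hlc v n) = p + (Λ.d (Λ.seq hlc v n) - p) := by
    funext j; have h9 : p j ≤ Λ.d (Λ.seq hlc v n) j := hp j; simp only [Pi.add_apply, Pi.sub_apply]; omega
  have hβ : Λ.d β = Λ.d (Λ.seq hlc v n) - p := by
    have h2 : Λ.d (Λ.seq hlc v n) = Λ.d α + Λ.d β := by
      rw [← hc, Λ.d_comp]
    funext j
    have h3 := congrFun h2 j
    have h4 := hp j
    simp only [Pi.add_apply, Pi.sub_apply, hα] at h3 ⊢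
    omega
  exact Λ.factor_unique hd h hc hα hβ h' hc' hα' hβ'

lemma head_mono {m n : ℕ} (hmn : m ≤ n) {p : Fin k → ℕ}
    (hpm : p ≤ Λ.d (Λ.seq hlc v m)) (hpn : p ≤ Λ.d (Λ.seq hlc v n)) :
    Λ.head hlc v m p hpm = Λ.head hlc v n p hpn := by
  obtain ⟨ν, hν, hcomp⟩ := Λ.seq_prefix hlc v hmn
  obtain ⟨h, hc, hα, hβ⟩ := Λ.headTail_spec hlc v m p hpm
  have hstail : Λ.s (Λ.tail hlc v m p hpm) = Λ.r ν := by
    rw [← Λ.s_comp _ _ h, hc]; exact hν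
  have h3 : Λ.s (Λ.comp (Λ.head hlc v m p hpm) (Λ.tail hlc v m p hpm) h) = Λ.r ν := by
    rw [Λ.s_comp]; exact hstail
  have h4 : Λ.s (Λ.head hlc v m p hpm) =
      Λ.r (Λ.comp (Λ.tail hlc v m p hpm) ν hstail) := by
    rw [Λ.r_comp]; exact h
  have hC : Λ.comp (Λ.head hlc v m p hpm) (Λ.comp (Λ.tail hlc v m p hpm) ν hstail) h4
      = Λ.seq hlc v n := by
    rw [← Λ.comp_assoc _ _ _ h hstail h3 h4]
    exact (Λ.comp_congr hc rfl h3).trans hcomp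
  exact (Λ.eq_head hlc v hpn h4 hC hα).1

lemma head_indep {m n : ℕ} {p : Fin k → ℕ}
    (hpm : p ≤ Λ.d (Λ.seq hlc v m)) (hpn : p ≤ Λ.d (Λ.seq hlc v n)) :
    Λ.head hlc v m p hpm = Λ.head hlc v n p hpn := by
  rcases le_total m n with hmn | hnm
  · exact Λ.head_mono hlc v hmn hpm hpn
  · exact (Λ.head_mono hlc v hnm hpn hpm).symm

lemma exists_mid (n : ℕ) (p q : Fin k → ℕ) (hpq : p ≤ q)
    (hqn : q ≤ Λ.d (Λ.seq hlc v n)) :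
    ∃ m : Λ.Path, ∃ h : Λ.s (Λ.head hlc v n p (hpq.trans hqn)) = Λ.r m,
      Λ.comp _ m h = Λ.head hlc v n q hqn ∧ Λ.d m = q - p := by
  obtain ⟨h', hc', hdh, hdt⟩ := Λ.headTail_spec hlc v n q hqn
  have hd : Λ.d (Λ.head hlc v n q hqn) = p + (q - p) := by
    rw [hdh]; funext j; have h9 : p j ≤ q j := hpq j
    simp only [Pi.add_apply, Pi.sub_apply]; omega
  obtain ⟨α, β, h, hc, hα, hβ⟩ := Λ.exists_split hd
  have hsβ : Λ.s β = Λ.r (Λ.tail hlc v n q hqn) := by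
    rw [← Λ.s_comp _ _ h, hc]; exact h'
  have h3 : Λ.s (Λ.comp α β h) = Λ.r (Λ.tail hlc v n q hqn) := by
    rw [Λ.s_comp]; exact hsβ
  have H : Λ.s α = Λ.r (Λ.comp β (Λ.tail hlc v n q hqn) hsβ) := by
    rw [Λ.r_comp]; exact h
  have hC : Λ.comp α (Λ.comp β (Λ.tail hlc v n q hqn) hsβ) H = Λ.seq hlc v n := by
    rw [← Λ.comp_assoc _ _ _ h hsβ h3 H]
    exact (Λ.comp_congr hc rfl h3).trans hc'
  have h1 := (Λ.eq_head hlc v (hpq.trans hqn) H hC hα).1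
  subst h1
  exact ⟨β, h, hc, hβ⟩

/-- The segment of the limit path between degrees `p` and `q`. -/
noncomputable def mid (n : ℕ) (p q : Fin k → ℕ) (hpq : p ≤ q)
    (hqn : q ≤ Λ.d (Λ.seq hlc v n)) : Λ.Path :=
  (Λ.exists_mid hlc v n p q hpq hqn).choose

lemma mid_spec (n : ℕ) (p q : Fin k → ℕ) (hpq : p ≤ q)
    (hqn : q ≤ Λ.d (Λ.seq hlc v n)) :
    ∃ h : Λ.s (Λ.head hlc v n p (hpq.trans hqn)) = Λ.r (Λ.mid hlc v n p q hpq hqn),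
      Λ.comp _ _ h = Λ.head hlc v n q hqn ∧
        Λ.d (Λ.mid hlc v n p q hpq hqn) = q - p :=
  (Λ.exists_mid hlc v n p q hpq hqn).choose_spec

lemma eq_mid {n : ℕ} {p q : Fin k → ℕ} (hpq : p ≤ q)
    (hqn : q ≤ Λ.d (Λ.seq hlc v n)) {m : Λ.Path}
    (h : Λ.s (Λ.head hlc v n p (hpq.trans hqn)) = Λ.r m)
    (hc : Λ.comp _ m h = Λ.head hlc v n q hqn) :
    m = Λ.mid hlc v n p q hpq hqn := by
  obtain ⟨h', hc', hd'⟩ := Λ.mid_spec hlc v n p q hpq hqn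
  have hd : Λ.d (Λ.head hlc v n q hqn) = p + (q - p) := by
    obtain ⟨hh, hch, hdh, hdt⟩ := Λ.headTail_spec hlc v n q hqn
    rw [hdh]; funext j; have h9 : p j ≤ q j := hpq j
    simp only [Pi.add_apply, Pi.sub_apply]; omega
  have hdm : Λ.d m = q - p := by
    have h2 : Λ.d (Λ.head hlc v n q hqn) = Λ.d (Λ.head hlc v n p (hpq.trans hqn)) + Λ.d m := by
      rw [← hc, Λ.d_comp]
    obtain ⟨hh, hch, hdh, hdt⟩ := Λ.headTail_spec hlc v n q hqn
    obtain ⟨hh2, hch2, hdh2, hdt2⟩ := Λ.headTail_spec hlc v n p (hpq.trans hqn)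
    funext j
    have h3 := congrFun h2 j
    have h4 := hpq j
    rw [hdh, hdh2] at h3
    simp only [Pi.add_apply, Pi.sub_apply] at h3 ⊢
    omega
  exact (Λ.factor_unique hd h hc
    (Λ.headTail_spec hlc v n p (hpq.trans hqn)).choose_spec.2.1 hdm h' hc'
    (Λ.headTail_spec hlc v n p (hpq.trans hqn)).choose_spec.2.1 hd').2

lemma mid_indep {m n : ℕ} {p q : Fin k → ℕ} (hpq : p ≤ q)
    (hqm : q ≤ Λ.d (Λ.seq hlc v m)) (hqn : q ≤ Λ.d (Λ.seq hlc v n)) :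
    Λ.mid hlc v m p q hpq hqm = Λ.mid hlc v n p q hpq hqn := by
  obtain ⟨hm, hcm, hdm⟩ := Λ.mid_spec hlc v m p q hpq hqm
  have e1 : Λ.head hlc v m p (hpq.trans hqm) = Λ.head hlc v n p (hpq.trans hqn) :=
    Λ.head_indep hlc v _ _
  have e2 : Λ.head hlc v m q hqm = Λ.head hlc v n q hqn :=
    Λ.head_indep hlc v _ _
  have hm' : Λ.s (Λ.head hlc v n p (hpq.trans hqn)) = Λ.r (Λ.mid hlc v m p q hpq hqm) :=
    e1 ▸ hm
  have hcm' : Λ.comp _ _ hm' = Λ.head hlc v n q hqn :=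
    (Λ.comp_congr e1.symm rfl hm').trans (hcm.trans e2)
  exact ((Λ.eq_mid hlc v hpq hqn hm' hcm').symm).symm

lemma mid_comp (n : ℕ) (p q r : Fin k → ℕ) (hpq : p ≤ q) (hqr : q ≤ r)
    (hrn : r ≤ Λ.d (Λ.seq hlc v n)) :
    ∃ hc : Λ.s (Λ.mid hlc v n p q hpq (hqr.trans hrn)) =
        Λ.r (Λ.mid hlc v n q r hqr hrn),
      Λ.comp _ _ hc = Λ.mid hlc v n p r (hpq.trans hqr) hrn := by
  obtain ⟨h1, c1, d1⟩ := Λ.mid_spec hlc v n p q hpq (hqr.trans hrn)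
  obtain ⟨h2, c2, d2⟩ := Λ.mid_spec hlc v n q r hqr hrn
  have hc : Λ.s (Λ.mid hlc v n p q hpq (hqr.trans hrn)) =
      Λ.r (Λ.mid hlc v n q r hqr hrn) := by
    rw [← Λ.s_comp _ _ h1, c1]; exact h2
  refine ⟨hc, ?_⟩
  have h3 : Λ.s (Λ.comp _ _ h1) = Λ.r (Λ.mid hlc v n q r hqr hrn) := by
    rw [Λ.s_comp]; exact hc
  have H : Λ.s (Λ.head hlc v n p ((hpq.trans hqr).trans hrn)) =
      Λ.r (Λ.comp _ _ hc) := by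
    rw [Λ.r_comp]; exact h1
  have hC : Λ.comp _ _ H = Λ.head hlc v n r hrn := by
    rw [← Λ.comp_assoc _ _ _ h1 hc h3 H]
    exact (Λ.comp_congr c1 rfl h3).trans c2
  exact Λ.eq_mid hlc v (hpq.trans hqr) hrn H hC

lemma exists_le_seq (q : Fin k → ℕ)
    (hq : ∀ i, (q i : ℕ∞) ≤ ⨆ n, ((Λ.d (Λ.seq hlc v n) i : ℕ) : ℕ∞)) :
    ∃ n, q ≤ Λ.d (Λ.seq hlc v n) := by
  have key : ∀ i, ∃ n, q i ≤ Λ.d (Λ.seq hlc v n) i := by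
    intro i
    by_contra hcon
    push_neg at hcon
    have hub : (⨆ n, ((Λ.d (Λ.seq hlc v n) i : ℕ) : ℕ∞)) ≤ ((q i - 1 : ℕ) : ℕ∞) :=
      iSup_le fun n => Nat.cast_le.mpr (by have := hcon n; omega)
    have h5 := (hq i).trans hub
    rw [Nat.cast_le] at h5
    have h0 := hcon 0
    omega
  choose f hf using key
  refine ⟨Finset.univ.sup f, fun i => (hf i).trans ?_⟩
  exact Λ.d_seq_mono hlc v (Finset.le_sup (Finset.mem_univ i)) i

lemma bdry_aux (p : Fin k → ℕ) (i : Fin k) (n : ℕ) (hpn : p ≤ Λ.d (Λ.seq hlc v n))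
    (hdle : ∀ m, Λ.d (Λ.seq hlc v m) i ≤ p i) :
    Λ.degAt (e k i) (Λ.s (Λ.head hlc v n p hpn)) = ∅ := by
  have h1 : Λ.d (Λ.seq hlc v n) i = p i := le_antisymm (hdle n) (hpn i)
  have hmono : Λ.d (Λ.seq hlc v n) i ≤ Λ.d (Λ.seq hlc v (n + 1)) i :=
    Λ.d_seq_mono hlc v (Nat.le_succ n) i
  have h2 : Λ.d (Λ.seq hlc v (n + 1)) i = Λ.d (Λ.seq hlc v n) i :=
    le_antisymm (by rw [h1]; exact hdle (n + 1)) hmono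
  have hempty := Λ.seq_stall hlc v h2
  have hpn1 : p ≤ Λ.d (Λ.seq hlc v (n + 1)) :=
    hpn.trans (Λ.d_seq_mono hlc v (Nat.le_succ n))
  obtain ⟨h, hc, hdh, hdt⟩ := Λ.headTail_spec hlc v (n + 1) p hpn1
  have hβi : Λ.d (Λ.tail hlc v (n + 1) p hpn1) i = 0 := by
    rw [hdt]
    simp only [Pi.sub_apply]
    omega
  have hsβ : Λ.s (Λ.tail hlc v (n + 1) p hpn1) = Λ.s (Λ.seq hlc v (n + 1)) := by
    rw [← hc, Λ.s_comp]
  have hkey := Λ.keyLC hlc (∑ j, Λ.d (Λ.tail hlc v (n + 1) p hpn1) j)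
    (Λ.tail hlc v (n + 1) p hpn1) le_rfl hβi
  rw [Λ.head_mono hlc v (Nat.le_succ n) hpn hpn1]
  rw [← Set.not_nonempty_iff_eq_empty]
  intro hne
  rw [h] at hne
  have := hkey.mp hne
  rw [hsβ, hempty] at this
  exact Set.not_nonempty_empty this

end KGraph

end Aux4
section Aux5

namespace KGraph

variable {k : ℕ} (Λ : KGraph k) (hlc : Λ.LocallyConvex) (v : Λ.Obj)

lemma r_mid_zero (n : ℕ) (h0 : (0 : Fin k → ℕ) ≤ Λ.d (Λ.seq hlc v n)) :
    Λ.r (Λ.mid hlc v n 0 0 le_rfl h0) = v := by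
  obtain ⟨h, hc, hd⟩ := Λ.mid_spec hlc v n 0 0 le_rfl h0
  rw [← h]
  obtain ⟨hh, hch, hdh, hdt⟩ := Λ.headTail_spec hlc v n 0 (le_rfl.trans h0)
  rw [Λ.s_eq_r_of_d_eq_zero hdh]
  have h5 := Λ.r_comp _ _ hh
  rw [hch] at h5
  rw [← h5, Λ.r_seq]

end KGraph

end Aux5

/-- in a locally convex `k`-graph, every vertex is the range of
some boundary path. -/
theorem stmt14 {k : ℕ} (Λ : KGraph k) (hlc : Λ.LocallyConvex) (v : Λ.Obj) :
    ∃ x : BPath Λ, x.r = v := by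
  classical
  refine ⟨{
    deg := fun i => ⨆ n, ((Λ.d (Λ.seq hlc v n) i : ℕ) : ℕ∞)
    toFun := fun p q hpq hq =>
      Λ.mid hlc v (Λ.exists_le_seq hlc v q hq).choose p q hpq
        (Λ.exists_le_seq hlc v q hq).choose_spec
    d_toFun := ?_
    comp_toFun := ?_
    bdry := ?_ }, ?_⟩
  · intro p q h1 h2
    obtain ⟨h, hc, hd⟩ := Λ.mid_spec hlc v _ p q h1
      (Λ.exists_le_seq hlc v q h2).choose_spec
    exact hd
  · intro p q r hpq hqr hpr hr hq
    have hqn : q ≤ Λ.d (Λ.seq hlc v (Λ.exists_le_seq hlc v r hr).choose) :=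
      hqr.trans (Λ.exists_le_seq hlc v r hr).choose_spec
    rw [Λ.mid_indep hlc v hpq (Λ.exists_le_seq hlc v q hq).choose_spec hqn]
    exact Λ.mid_comp hlc v _ p q r hpq hqr (Λ.exists_le_seq hlc v r hr).choose_spec
  · intro p hp i hi
    obtain ⟨h, hc, hd⟩ := Λ.mid_spec hlc v (Λ.exists_le_seq hlc v p hp).choose p p
      le_rfl (Λ.exists_le_seq hlc v p hp).choose_spec
    rw [← h]
    apply Λ.bdry_aux hlc v p i _ _
    intro m
    have h1 : ((Λ.d (Λ.seq hlc v m) i : ℕ) : ℕ∞) ≤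
        ⨆ n, ((Λ.d (Λ.seq hlc v n) i : ℕ) : ℕ∞) := le_iSup (fun n => ((Λ.d (Λ.seq hlc v n) i : ℕ) : ℕ∞)) m
    have h2 : (⨆ n, ((Λ.d (Λ.seq hlc v n) i : ℕ) : ℕ∞)) ≤ ((p i : ℕ) : ℕ∞) := by
      have h3 : (⨆ n, ((Λ.d (Λ.seq hlc v n) i : ℕ) : ℕ∞)) < (p i : ℕ∞) + 1 :=
        not_le.mp hi
      exact (ENat.lt_add_one_iff (ENat.coe_ne_top (p i))).mp h3
    exact Nat.cast_le.mp (h1.trans h2)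
  · exact Λ.r_mid_zero hlc v _ _
end

section
/- Let Λ be a locally convex row-finite k-graph and H a saturated hereditary subset of Λ^0. Then Γ(Λ∖H) := (Λ^0∖H, {λ∈Λ : s(λ)∉H}, r, s) with the restricted degree map is itself a locally convex row-finite k-graph; in particular the factorisation property holds: if λ∈Γ and d(λ)=p+q, the unique factors μ,ν∈Λ with λ=μν, d(μ)=p, d(ν)=q both lie in Γ. -/
open scoped ENNReal

lemma deg_zero_eq_ι {k : ℕ} (Λ : KGraph k) (lam : Λ.Path) (h : Λ.d lam = 0) :
    lam = Λ.ι (Λ.r lam) := by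
  obtain ⟨p, _, hu⟩ := Λ.factor lam 0 0 (by rw [h]; simp)
  have h1 : p = (Λ.ι (Λ.r lam), lam) := by
    refine (hu _ ⟨Λ.s_ι _ ▸ rfl, Λ.comp_ι_left lam _, Λ.d_ι _, h⟩).symm
  have h2 : p = (lam, Λ.ι (Λ.s lam)) := by
    refine (hu _ ⟨(Λ.r_ι _).symm, Λ.comp_ι_right lam _, h, Λ.d_ι _⟩).symm
  have := h1.symm.trans h2
  exact (congrArg Prod.fst this).symm

lemma exists_notin_H {k : ℕ} (Λ : KGraph k)
    (H : Set Λ.Obj) (hsat : Λ.Saturated H) (v : Λ.Obj) (hv : v ∉ H) (j : Fin k)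
    (hne : (Λ.degAt (KGraph.e k j) v).Nonempty) :
    ∃ α ∈ Λ.degAt (KGraph.e k j) v, Λ.s α ∉ H := by
  by_contra hc
  push_neg at hc
  apply hv
  apply hsat v j
  intro lam hlam
  obtain ⟨⟨hd, hext⟩, hr⟩ := hlam
  by_cases h0 : Λ.d lam = KGraph.e k j
  · exact hc lam ⟨h0, hr⟩
  · have hoff : ∀ i, i ≠ j → Λ.d lam i = 0 := by
      intro i hi
      have := hd i
      simp only [KGraph.e, Pi.single_apply, if_neg hi] at this
      omega
    have hjj : Λ.d lam j = 0 := by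
      by_contra hne'
      apply h0
      have hle := hd j
      rw [show KGraph.e k j j = 1 from by simp [KGraph.e]] at hle
      funext i
      by_cases hi : i = j
      · subst hi
        rw [show KGraph.e k i i = 1 from by simp [KGraph.e]]
        exact Nat.le_antisymm hle (Nat.one_le_iff_ne_zero.mpr hne')
      · simp only [KGraph.e, Pi.single_apply, if_neg hi, hoff i hi]
    have hz : Λ.d lam = 0 := by
      funext i
      by_cases hi : i = j
      · subst hi; exact hjj
      · exact hoff i hi
    have hs : Λ.s lam = v := by
      rw [deg_zero_eq_ι Λ lam hz, Λ.s_ι, hr]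
    have hemp := hext j (by rw [hz]; simp)
    rw [hs] at hemp
    rw [hemp] at hne
    exact (Set.not_nonempty_empty hne).elim

/-- for `H` saturated and hereditary, `Γ(Λ∖H)` (paths with
source outside `H`) is a locally convex row-finite `k`-graph: paths in `Γ` have
range outside `H`, `Γ` is closed under the factorisation of `Λ`, is row-finite,
and is locally convex. -/
theorem stmt17 {k : ℕ} (Λ : KGraph k) (hlc : Λ.LocallyConvex) (hrf : Λ.RowFinite)
    (H : Set Λ.Obj) (hher : Λ.Hereditary H) (hsat : Λ.Saturated H) :
    (∀ lam : Λ.Path, Λ.s lam ∉ H → Λ.r lam ∉ H) ∧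
    (∀ lam : Λ.Path, Λ.s lam ∉ H → ∀ (p q : Fin k → ℕ), Λ.d lam = p + q →
      ∀ (μ ν : Λ.Path) (hc : Λ.s μ = Λ.r ν), Λ.comp μ ν hc = lam →
        Λ.d μ = p → Λ.d ν = q → Λ.s μ ∉ H ∧ Λ.s ν ∉ H) ∧
    (∀ (v : Λ.Obj) (m : Fin k → ℕ), v ∉ H →
      {lam | lam ∈ Λ.degAt m v ∧ Λ.s lam ∉ H}.Finite) ∧
    (∀ v : Λ.Obj, v ∉ H → ∀ (i j : Fin k), i ≠ j →
      ∀ lam μ, lam ∈ Λ.degAt (KGraph.e k i) v → Λ.s lam ∉ H →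
        μ ∈ Λ.degAt (KGraph.e k j) v → Λ.s μ ∉ H →
        (∃ α ∈ Λ.degAt (KGraph.e k j) (Λ.s lam), Λ.s α ∉ H) ∧
        (∃ β ∈ Λ.degAt (KGraph.e k i) (Λ.s μ), Λ.s β ∉ H)) := by
  have range : ∀ lam : Λ.Path, Λ.s lam ∉ H → Λ.r lam ∉ H := by
    intro lam hs hr
    exact hs (hher lam hr)
  refine ⟨range, ?_, ?_, ?_⟩
  · intro lam hs p q _ μ ν hc hcomp hdμ hdν
    have hsν : Λ.s ν = Λ.s lam := by rw [← hcomp, Λ.s_comp]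
    have hν : Λ.s ν ∉ H := hsν ▸ hs
    exact ⟨hc ▸ range ν hν, hν⟩
  · intro v m _
    exact (hrf v m).subset (fun lam hlam => hlam.1)
  · intro v hv i j hij lam μ hlam hsl hμ hsμ
    obtain ⟨h1, h2⟩ := hlc v i j hij lam μ hlam hμ
    exact ⟨exists_notin_H Λ H hsat _ hsl j h1,
      exists_notin_H Λ H hsat _ hsμ i h2⟩
end

section
/- Let Λ be a k-graph with no sources. If Λ fails condition (B) — i.e., there is a vertex v such that for every infinite path x∈Λ^∞(v) there exist distinct α,β∈Λ with αx=βx — then Λ fails the aperiodicity condition (A) at v: for every x∈Λ^∞(v) there exist p≠q∈ℕ^k with σ^p(x)=σ^q(x). Specifically, with m=d(α)∨d(β), σ^{m−d(α)}(x)=σ^{m−d(β)}(x). -/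
open scoped ENNReal

namespace InfPath

variable {k : ℕ} {Λ : KGraph k}

theorem toFun_congr (y : InfPath Λ) {a b a' b' : Fin k → ℕ}
    (ha : a = a') (hb : b = b') (h : a ≤ b) (h' : a' ≤ b') :
    y.toFun a b h = y.toFun a' b' h' := by subst ha; subst hb; rfl

theorem ext' {x y : InfPath Λ}
    (h : ∀ p q (hpq : p ≤ q), x.toFun p q hpq = y.toFun p q hpq) : x = y := by
  cases x; cases y
  simp only [InfPath.mk.injEq]
  funext p q hpq
  exact h p q hpq

theorem shift_shift (p q : Fin k → ℕ) (y : InfPath Λ) :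
    InfPath.shift p (InfPath.shift q y) = InfPath.shift (p + q) y := by
  apply ext'
  intro a b hab
  exact toFun_congr y (by rw [add_assoc]) (by rw [add_assoc]) _ _

end InfPath

/-- in a `k`-graph with no sources (with `ext` the extension of a
path by an infinite path, characterised by `σ^{d λ}(λx) = x`), if every
infinite path at `v` satisfies `αx = βx` for some `α ≠ β`, then aperiodicity
fails at `v`: every `x ∈ Λ^∞(v)` satisfies `σ^p(x) = σ^q(x)` for some `p ≠ q`,
specifically `p = (d α ∨ d β) − d α` and `q = (d α ∨ d β) − d β`. -/
theorem stmt19 {k : ℕ} (Λ : KGraph k) (hns : Λ.NoSources)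
    (ext : ∀ (lam : Λ.Path) (x : InfPath Λ), Λ.s lam = x.r → InfPath Λ)
    (hext_r : ∀ lam x h, (ext lam x h).r = Λ.r lam)
    (hext_shift : ∀ lam x h, InfPath.shift (Λ.d lam) (ext lam x h) = x)
    (hext_init : ∀ lam x h (h0 : (0 : Fin k → ℕ) ≤ Λ.d lam),
      (ext lam x h).toFun 0 (Λ.d lam) h0 = lam)
    (v : Λ.Obj)
    (hB : ∀ x : InfPath Λ, x.r = v →
      ∃ (α β : Λ.Path) (h1 : Λ.s α = x.r) (h2 : Λ.s β = x.r),
        α ≠ β ∧ ext α x h1 = ext β x h2) :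
    ∀ x : InfPath Λ, x.r = v →
      ∃ (p q : Fin k → ℕ), p ≠ q ∧ InfPath.shift p x = InfPath.shift q x ∧
        ∃ (α β : Λ.Path) (h1 : Λ.s α = x.r) (h2 : Λ.s β = x.r),
          α ≠ β ∧ ext α x h1 = ext β x h2 ∧
          p = (Λ.d α ⊔ Λ.d β) - Λ.d α ∧ q = (Λ.d α ⊔ Λ.d β) - Λ.d β := by
  intro x hx
  obtain ⟨α, β, h1, h2, hne, heq⟩ := hB x hx
  set m : Fin k → ℕ := Λ.d α ⊔ Λ.d β with hm
  refine ⟨m - Λ.d α, m - Λ.d β, ?_, ?_, α, β, h1, h2, hne, heq, rfl, rfl⟩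
  · -- p ≠ q
    intro hpq
    have hd : Λ.d α = Λ.d β := by
      funext i
      have := congrFun hpq i
      simp only [Pi.sub_apply, Pi.sup_apply, hm] at this
      have ha : Λ.d α i ≤ max (Λ.d α i) (Λ.d β i) := le_max_left _ _
      have hb : Λ.d β i ≤ max (Λ.d α i) (Λ.d β i) := le_max_right _ _
      omega
    -- then α = β, contradiction
    have h0α : (0 : Fin k → ℕ) ≤ Λ.d α := fun i => Nat.zero_le _
    have h0β : (0 : Fin k → ℕ) ≤ Λ.d β := fun i => Nat.zero_le _
    have hα := hext_init α x h1 h0α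
    have hβ := hext_init β x h2 h0β
    rw [heq] at hα
    exact hne (hα.symm.trans ((InfPath.toFun_congr _ rfl hd _ _).trans hβ))
  · -- shift equality
    have hma : m - Λ.d α + Λ.d α = m := by
      funext i
      simp only [Pi.add_apply, Pi.sub_apply, Pi.sup_apply, hm]
      have ha : Λ.d α i ≤ max (Λ.d α i) (Λ.d β i) := le_max_left _ _
      omega
    have hmb : m - Λ.d β + Λ.d β = m := by
      funext i
      simp only [Pi.add_apply, Pi.sub_apply, Pi.sup_apply, hm]
      have hb : Λ.d β i ≤ max (Λ.d α i) (Λ.d β i) := le_max_right _ _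
      omega
    calc InfPath.shift (m - Λ.d α) x
        = InfPath.shift (m - Λ.d α) (InfPath.shift (Λ.d α) (ext α x h1)) := by
          rw [hext_shift]
      _ = InfPath.shift m (ext α x h1) := by rw [InfPath.shift_shift, hma]
      _ = InfPath.shift m (ext β x h2) := by rw [heq]
      _ = InfPath.shift (m - Λ.d β) (InfPath.shift (Λ.d β) (ext β x h2)) := by
          rw [InfPath.shift_shift, hmb]
      _ = InfPath.shift (m - Λ.d β) x := by rw [hext_shift]
end
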